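/- arXiv:1207.1607 — 7 statements merged into one kernel-verified Lean document; each statement's English description precedes it below -/
import Mathlib

section
/- For q ∈ ℕ, p ∈ ℤ with gcd(p,q) = r > 1, and any 1-periodic function φ : ℝ → ℂ, the incomplete Gauss sum g_φ(p,q) = ∑_{h=0}^{q-1} φ(h/q) e^{2πi p h²/q} satisfies g_φ(p,q) = g_{φ_r}(p/r, q/r), where φ_r(x) = ∑_{k=0}^{r-1} φ((x+k)/r). -/
open Finset Complex Real

lemma aux_sum_range_mul {M : Type*} [AddCommMonoid M] (f : ℕ → M) (m : ℕ) :
    ∀ r, ∑ h ∈ Finset.range (m * r), f h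
      = ∑ k ∈ Finset.range r, ∑ j ∈ Finset.range m, f (m * k + j)
  | 0 => by simp
  | (r + 1) => by
    rw [Nat.mul_succ, Finset.sum_range_add, aux_sum_range_mul f m r,
      Finset.sum_range_succ]

/-- Reduction of incomplete Gauss sums to the coprime case:
if `gcd(p,q) = r > 1` then `g_φ(p,q) = g_{φ_r}(p/r, q/r)`. -/
theorem stmt_0 (q : ℕ) (hq : 0 < q) (p : ℤ) (φ : ℝ → ℂ)
    (hper : ∀ x : ℝ, φ (x + 1) = φ x)
    (r : ℕ) (hr : (r : ℤ) = Int.gcd p (q : ℤ)) (hr1 : 1 < r) :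
    ∑ h ∈ Finset.range q, φ ((h : ℝ) / q) *
        Complex.exp (2 * Real.pi * Complex.I * (p : ℂ) * (h : ℂ) ^ 2 / q)
      = ∑ h ∈ Finset.range (q / r),
          (∑ k ∈ Finset.range r, φ (((h : ℝ) / ((q / r : ℕ) : ℝ) + k) / r)) *
            Complex.exp (2 * Real.pi * Complex.I * ((p / (r : ℤ) : ℤ) : ℂ) * (h : ℂ) ^ 2
              / ((q / r : ℕ) : ℂ)) := by
  have hrpos : 0 < r := by omega
  have hrq : r ∣ q := by
    have h1 : ((Int.gcd p (q : ℤ) : ℤ)) ∣ (q : ℤ) := Int.gcd_dvd_right _ _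
    rw [← hr] at h1
    exact_mod_cast h1
  have hrp : (r : ℤ) ∣ p := by rw [hr]; exact Int.gcd_dvd_left _ _
  obtain ⟨m, hq2⟩ := hrq
  obtain ⟨p', hp2⟩ := hrp
  have hm : q / r = m := by rw [hq2, Nat.mul_div_cancel_left _ hrpos]
  have hp' : p / (r : ℤ) = p' := by
    rw [hp2, Int.mul_ediv_cancel_left _ (by exact_mod_cast hrpos.ne')]
  have hmpos : 0 < m := by
    rcases Nat.eq_zero_or_pos m with h | h
    · subst h; simp at hq2; omega
    · exact h
  have hm0 : (m : ℂ) ≠ 0 := by exact_mod_cast hmpos.ne'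
  have hr0 : (r : ℂ) ≠ 0 := by exact_mod_cast hrpos.ne'
  have hm0' : (m : ℝ) ≠ 0 := by exact_mod_cast hmpos.ne'
  have hr0' : (r : ℝ) ≠ 0 := by exact_mod_cast hrpos.ne'
  rw [hm, hp', hq2, Nat.mul_comm r m, aux_sum_range_mul, Finset.sum_comm]
  simp only [Finset.sum_mul]
  refine Finset.sum_congr rfl fun j hj => Finset.sum_congr rfl fun k hk => ?_
  congr 1
  · congr 1
    push_cast
    field_simp
    ring
  · rw [Complex.exp_eq_exp_iff_exists_int]
    refine ⟨p' * (2 * (j : ℤ) * k + m * k ^ 2), ?_⟩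
    push_cast [hp2]
    field_simp
    ring
end

section
/- Let q ≡ 2 mod 4, gcd(p,q) = 1, and k an odd integer. Then ∑_{h mod q} e^{2πi(p h² + k h)/q} = 2 g_1(2p, q/2) · e^{-2πi \overline{8p} k² / (q/2)}, where \overline{8p} is the inverse of 8p modulo q/2. -/
open Finset Complex Real

noncomputable def Efun (n : ℕ) (a : ℤ) : ℂ := Complex.exp (2 * Real.pi * Complex.I * a / n)

lemma Efun_congr {n : ℕ} (hn : n ≠ 0) {a b : ℤ} (h : (n:ℤ) ∣ a - b) : Efun n a = Efun n b := by
  obtain ⟨s, hs⟩ := h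
  have ha : a = b + n * s := by linarith
  subst ha
  unfold Efun
  have hn' : (n:ℂ) ≠ 0 := Nat.cast_ne_zero.mpr hn
  have harg : 2 * Real.pi * Complex.I * ((b + (n:ℤ) * s : ℤ) : ℂ) / n
      = 2 * Real.pi * Complex.I * ((b:ℤ):ℂ) / n + (s:ℂ) * (2 * Real.pi * Complex.I) := by
    push_cast
    field_simp
  rw [harg, Complex.exp_add, Complex.exp_int_mul_two_pi_mul_I, mul_one]

lemma Efun_two_mul {m : ℕ} (hm : m ≠ 0) (a : ℤ) : Efun (2*m) (2*a) = Efun m a := by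
  unfold Efun
  congr 1
  have hm' : (m:ℂ) ≠ 0 := Nat.cast_ne_zero.mpr hm
  push_cast
  field_simp

lemma Efun_add (m : ℕ) (a b : ℤ) : Efun m (a+b) = Efun m a * Efun m b := by
  unfold Efun
  rw [← Complex.exp_add]
  congr 1
  push_cast
  ring

lemma Efun_period {m : ℕ} (hm0 : m ≠ 0) (hm : Odd (m:ℤ)) {p k : ℤ} (hp : Odd p) (hk : Odd k)
    {a b : ℤ} (hab : (m:ℤ) ∣ a - b) :
    Efun (2*m) (p*a^2+k*a) = Efun (2*m) (p*b^2+k*b) := by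
  apply Efun_congr (by omega)
  obtain ⟨s, hs⟩ := hab
  have ha : a = b + m * s := by linarith
  subst ha
  have hX : Even (p*(m:ℤ)*s^2 + k*s) := by
    have h1 : Even ((p*(m:ℤ)-1)*s^2) := ((hp.mul hm).sub_odd odd_one).mul_right _
    have h2 : Even ((k-1)*s) := (hk.sub_odd odd_one).mul_right _
    have h3 : Even (s*(s+1)) := Int.even_mul_succ_self s
    have : p*(m:ℤ)*s^2 + k*s = (p*(m:ℤ)-1)*s^2 + (k-1)*s + s*(s+1) := by ring
    rw [this]
    exact (h1.add h2).add h3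
  obtain ⟨c, hc⟩ := hX
  refine ⟨p*b*s + c, ?_⟩
  push_cast
  linear_combination (m:ℤ) * hc

lemma sum_range_eq_sum_zmod (m : ℕ) (hm0 : m ≠ 0) (f : ℤ → ℂ) :
    haveI : NeZero m := ⟨hm0⟩
    ∑ h ∈ Finset.range m, f (h:ℤ) = ∑ x : ZMod m, f ((x.val:ℕ):ℤ) := by
  haveI : NeZero m := ⟨hm0⟩
  apply Finset.sum_nbij' (i := fun h => ((h:ℕ) : ZMod m)) (j := fun x => x.val)
  · intro a _; exact Finset.mem_univ _
  · intro x _; exact Finset.mem_range.mpr (ZMod.val_lt x)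
  · intro a ha; exact ZMod.val_cast_of_lt (Finset.mem_range.mp ha)
  · intro x _; exact ZMod.natCast_rightInverse x
  · intro a ha; rw [ZMod.val_cast_of_lt (Finset.mem_range.mp ha)]

lemma main_aux (m : ℕ) (hm0 : m ≠ 0) (hmodd : Odd m) (p k w : ℤ)
    (hpodd : Odd p) (hk : Odd k) (hw : (m:ℤ) ∣ 1 - 8*p*w) :
    ∑ h ∈ Finset.range (2*m), Efun (2*m) (p*(h:ℤ)^2 + k*(h:ℤ))
      = 2 * (∑ h ∈ Finset.range m, Efun m (2*p*(h:ℤ)^2)) * Efun m (-(w*k^2)) := by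
  haveI : NeZero m := ⟨hm0⟩
  have hmZ : Odd (m:ℤ) := by exact_mod_cast hmodd
  -- Step 1: split the sum
  have hsplit : ∑ h ∈ Finset.range (2*m), Efun (2*m) (p*(h:ℤ)^2 + k*(h:ℤ))
      = 2 * ∑ h ∈ Finset.range m, Efun (2*m) (p*(h:ℤ)^2 + k*(h:ℤ)) := by
    have h1 := Finset.sum_range_add (fun h : ℕ => Efun (2*m) (p*(h:ℤ)^2 + k*(h:ℤ))) m m
    rw [← two_mul] at h1
    rw [h1]
    have h2 : ∀ h ∈ Finset.range m,
        Efun (2*m) (p*((m+h:ℕ):ℤ)^2 + k*((m+h:ℕ):ℤ)) = Efun (2*m) (p*(h:ℤ)^2 + k*(h:ℤ)) := by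
      intro h _
      rw [show ((m+h:ℕ):ℤ) = (m:ℤ)+(h:ℤ) by push_cast; ring]
      exact Efun_period hm0 hmZ hpodd hk ⟨1, by ring⟩
    rw [Finset.sum_congr rfl h2]
    ring
  rw [hsplit, sum_range_eq_sum_zmod m hm0 (fun z => Efun (2*m) (p*z^2 + k*z))]
  -- Step 3: reindex x ↦ 2*(x+t)
  set t : ZMod m := ((-(2*w*k) : ℤ) : ZMod m) with ht
  have hu : IsUnit (2 : ZMod m) := by
    have : IsUnit ((2:ℕ) : ZMod m) := (ZMod.isUnit_iff_coprime 2 m).mpr (Nat.coprime_two_left.mpr hmodd)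
    simpa using this
  have hφ : Function.Bijective (fun x : ZMod m => 2*(x+t)) := by
    have h1 : Function.Bijective (fun y : ZMod m => (hu.unit : ZMod m) * y) := hu.unit.mulLeft_bijective
    rw [hu.unit_spec] at h1
    exact h1.comp (Equiv.addRight t).bijective
  rw [← Fintype.sum_bijective _ hφ
      (fun x : ZMod m => Efun (2*m) (p*(((2*(x+t)).val:ℕ):ℤ)^2 + k*(((2*(x+t)).val:ℕ):ℤ)))
      (fun x : ZMod m => Efun (2*m) (p*((x.val:ℕ):ℤ)^2 + k*((x.val:ℕ):ℤ)))
      (fun x => rfl)]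
  -- Step 4: pointwise computation
  have hpoint : ∀ x : ZMod m,
      Efun (2*m) (p*(((2*(x+t)).val:ℕ):ℤ)^2 + k*(((2*(x+t)).val:ℕ):ℤ))
        = Efun m (2*p*((x.val:ℕ):ℤ)^2) * Efun m (-(w*k^2)) := by
    intro x
    set h : ℤ := ((x.val:ℕ):ℤ) with hh
    set A : ℤ := 2*(h - 2*w*k) with hA
    have hx : ((h:ℤ) : ZMod m) = x := by
      rw [hh]; push_cast; exact ZMod.natCast_rightInverse x
    have hv : (m:ℤ) ∣ (((2*(x+t)).val : ℕ):ℤ) - A := by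
      rw [← ZMod.intCast_zmod_eq_zero_iff_dvd]
      push_cast [hA, ht, ZMod.natCast_val, ZMod.cast_id]
      rw [hx]
      ring
    have e1 : Efun (2*m) (p*(((2*(x+t)).val:ℕ):ℤ)^2 + k*(((2*(x+t)).val:ℕ):ℤ))
        = Efun (2*m) (p*A^2 + k*A) := Efun_period hm0 hmZ hpodd hk hv
    have e2 : p*A^2 + k*A = 2*(2*p*(h-2*w*k)^2 + k*(h-2*w*k)) := by rw [hA]; ring
    have e4 : Efun m (2*p*(h-2*w*k)^2 + k*(h-2*w*k)) = Efun m (2*p*h^2 + -(w*k^2)) := by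
      apply Efun_congr hm0
      obtain ⟨s, hs⟩ := hw
      exact ⟨-(s*(w*k^2-k*h)), by linear_combination (-(w*k^2 - k*h)) * hs⟩
    rw [e1, e2, Efun_two_mul hm0, e4, Efun_add]
  rw [Finset.sum_congr rfl (fun x _ => hpoint x), ← Finset.sum_mul]
  rw [← sum_range_eq_sum_zmod m hm0 (fun z => Efun m (2*p*z^2))]
  ring

/-- If `q ≡ 2 mod 4`, `gcd(p,q) = 1` and `k` is odd, then
`∑_{h mod q} e((p h² + k h)/q) = 2 g₁(2p, q/2) · e(-(8p)⁻¹ k²/(q/2))`. -/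
theorem stmt_5 (q : ℕ) (hq : q % 4 = 2) (p k : ℤ)
    (hp : Int.gcd p (q : ℤ) = 1) (hk : Odd k)
    (w : ℤ) (hw : 8 * p * w ≡ 1 [ZMOD ((q / 2 : ℕ) : ℤ)]) :
    ∑ h ∈ Finset.range q,
        Complex.exp (2 * Real.pi * Complex.I * ((p : ℂ) * (h : ℂ) ^ 2 + (k : ℂ) * h) / q)
      = 2 * (∑ h ∈ Finset.range (q / 2),
            Complex.exp (2 * Real.pi * Complex.I * (2 * (p : ℂ)) * (h : ℂ) ^ 2 / ((q / 2 : ℕ) : ℂ))) *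
          Complex.exp (-(2 * Real.pi * Complex.I) * (w : ℂ) * (k : ℂ) ^ 2 / ((q / 2 : ℕ) : ℂ)) := by
  set m := q / 2 with hmdef
  have hq2 : q = 2 * m := by omega
  have hm0 : m ≠ 0 := by omega
  have hmodd : Odd m := Nat.odd_iff.mpr (by omega)
  have hpodd : Odd p := by
    rcases Int.even_or_odd p with he | ho
    · exfalso
      have h2q : (2:ℤ) ∣ (q:ℤ) := ⟨(m:ℤ), by exact_mod_cast hq2⟩
      have hg := Int.dvd_gcd he.two_dvd h2q
      rw [hp] at hg
      norm_num at hg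
    · exact ho
  have hw' : ((m:ℕ):ℤ) ∣ 1 - 8*p*w := hw.dvd
  have key := main_aux m hm0 hmodd p k w hpodd hk hw'
  rw [hq2]
  have hL : ∀ h ∈ Finset.range (2*m),
      Complex.exp (2 * Real.pi * Complex.I * ((p : ℂ) * (h : ℂ) ^ 2 + (k : ℂ) * h) / ((2*m : ℕ):ℂ))
        = Efun (2*m) (p*(h:ℤ)^2 + k*(h:ℤ)) := by
    intro h _
    unfold Efun
    congr 1
    push_cast
    ring
  have hG : ∀ h ∈ Finset.range m,
      Complex.exp (2 * Real.pi * Complex.I * (2 * (p : ℂ)) * (h : ℂ) ^ 2 / ((m : ℕ) : ℂ))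
        = Efun m (2*p*(h:ℤ)^2) := by
    intro h _
    unfold Efun
    congr 1
    push_cast
    ring
  have hC : Complex.exp (-(2 * Real.pi * Complex.I) * (w : ℂ) * (k : ℂ) ^ 2 / ((m : ℕ) : ℂ))
      = Efun m (-(w*k^2)) := by
    unfold Efun
    congr 1
    push_cast
    ring
  rw [Finset.sum_congr rfl hL, Finset.sum_congr rfl hG, hC]
  exact key
end

section
/- If q ∈ ℕ is not a perfect square, then there exists an integer r with r ≡ 1 mod 4 and Jacobi symbol (q/r) = -1. -/
open jacobiSym in
private lemma aux_isSquare_of_even_factorization {q : ℕ} (hq0 : q ≠ 0)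
    (h : ∀ p, Even (q.factorization p)) : IsSquare q := by
  refine ⟨q.factorization.prod fun p e => p ^ (e / 2), ?_⟩
  conv_lhs => rw [← Nat.factorization_prod_pow_eq_self hq0]
  rw [← Finsupp.prod_mul]
  refine Finsupp.prod_congr fun p _ => ?_
  obtain ⟨k, hk⟩ := h p
  rw [← pow_add, hk]
  congr 1
  omega

private lemma aux_exists_odd_factorization {b : ℕ} (hb : ¬ IsSquare b) (hb0 : b ≠ 0) :
    ∃ p : ℕ, p.Prime ∧ Odd (b.factorization p) := by
  by_contra h
  push_neg at h
  refine hb (aux_isSquare_of_even_factorization hb0 fun p => ?_)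
  by_cases hp : p.Prime
  · exact Nat.not_odd_iff_even.mp (h p hp)
  · rw [Nat.factorization_eq_zero_of_not_prime b hp]; exact Even.zero

/-- If `q` is not a perfect square, there is `r ≡ 1 mod 4` with Jacobi symbol `(q/r) = -1`. -/
theorem stmt_6 (q : ℕ) (hq : ¬ IsSquare q) :
    ∃ r : ℕ, r % 4 = 1 ∧ jacobiSym (q : ℤ) r = -1 := by
  have hq0 : q ≠ 0 := by rintro rfl; exact hq ⟨0, rfl⟩
  set a := q.factorization 2 with ha
  set b := ordCompl[2] q with hb
  have hqab : 2 ^ a * b = q := Nat.ordProj_mul_ordCompl_eq_self q 2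
  have hb2 : ¬ (2 ∣ b) := Nat.not_dvd_ordCompl Nat.prime_two hq0
  have hb0 : b ≠ 0 := (Nat.ordCompl_pos 2 hq0).ne'
  have hbodd : Odd b := Nat.odd_iff.mpr (Nat.two_dvd_ne_zero.mp hb2)
  have hqz : (q : ℤ) = 2 ^ a * (b : ℤ) := by exact_mod_cast (congrArg (Nat.cast (R := ℤ)) hqab).symm
  by_cases haodd : Odd a
  · -- case: the exponent of 2 is odd
    have cop : Nat.Coprime 8 b := by
      have : Nat.Coprime 2 b := (Nat.Prime.coprime_iff_not_dvd Nat.prime_two).mpr hb2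
      exact Nat.Coprime.pow_left 3 this
    obtain ⟨r, hr8, hrb⟩ := Nat.chineseRemainder cop 5 1
    have hr8' : r % 8 = 5 := hr8
    have hr4 : r % 4 = 1 := by omega
    have hrodd : Odd r := by rw [Nat.odd_iff]; omega
    refine ⟨r, hr4, ?_⟩
    rw [hqz, jacobiSym.mul_left, jacobiSym.pow_left]
    have h2 : jacobiSym 2 r = -1 := by
      rw [jacobiSym.at_two hrodd, ZMod.χ₈_nat_eq_if_mod_eight]
      have : r % 2 = 1 := by omega
      simp [hr8', this]
    have hbr : jacobiSym (b : ℤ) r = 1 := by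
      rw [jacobiSym.quadratic_reciprocity_one_mod_four' hbodd hr4]
      have : (r : ℤ) % b = (1 : ℤ) % b := by exact_mod_cast congrArg (Nat.cast (R := ℤ)) hrb
      rw [jacobiSym.mod_left' this, jacobiSym.one_left]
    rw [h2, hbr, mul_one, Odd.neg_one_pow haodd]
  · -- case: the exponent of 2 is even; then b is not a square
    have haeven : Even a := Nat.not_odd_iff_even.mp haodd
    have hbns : ¬ IsSquare b := by
      rintro ⟨t, ht⟩
      obtain ⟨k, hk⟩ := haeven
      refine hq ⟨2 ^ k * t, ?_⟩
      rw [← hqab, ht, hk, pow_add]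
      ring
    obtain ⟨p, hp, hpodd⟩ := aux_exists_odd_factorization hbns hb0
    have hp2 : p ≠ 2 := by
      rintro rfl
      rw [Nat.factorization_eq_zero_of_not_dvd hb2] at hpodd
      simp at hpodd
    have hpo : Odd p := hp.odd_of_ne_two hp2
    set e := b.factorization p with he
    set c := ordCompl[p] b with hc
    have hbc : p ^ e * c = b := Nat.ordProj_mul_ordCompl_eq_self b p
    have hpc : ¬ (p ∣ c) := Nat.not_dvd_ordCompl hp hb0
    have hc0 : c ≠ 0 := (Nat.ordCompl_pos p hb0).ne'
    have hcodd : Odd c := by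
      refine Nat.odd_iff.mpr (Nat.two_dvd_ne_zero.mp fun h2c => hb2 ?_)
      exact dvd_trans h2c (hbc ▸ Dvd.intro_left _ rfl)
    have cop : Nat.Coprime (8 * c) p := by
      have c2 : Nat.Coprime 2 p := (Nat.Prime.coprime_iff_not_dvd Nat.prime_two).mpr
        (by rw [Nat.odd_iff] at hpo; omega)
      have c8 : Nat.Coprime 8 p := Nat.Coprime.pow_left 3 c2
      have ccp : Nat.Coprime c p := ((Nat.Prime.coprime_iff_not_dvd hp).mpr hpc).symm
      exact Nat.Coprime.mul c8 ccp
    haveI : Fact p.Prime := ⟨hp⟩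
    obtain ⟨x, hx⟩ := FiniteField.exists_nonsquare (F := ZMod p)
      (by rw [ZMod.ringChar_zmod_n]; exact hp2)
    obtain ⟨r, hr1, hrp⟩ := Nat.chineseRemainder cop 1 x.val
    have hr8 : r % 8 = 1 := by
      have := Nat.ModEq.of_dvd (by norm_num : (8:ℕ) ∣ 8 * c) hr1
      simpa [Nat.ModEq] using this
    have hr4 : r % 4 = 1 := by omega
    have hrodd : Odd r := by rw [Nat.odd_iff]; omega
    have hrc : r % c = 1 % c := Nat.ModEq.of_dvd (Dvd.intro_left 8 rfl) hr1
    refine ⟨r, hr4, ?_⟩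
    have hqz2 : (q : ℤ) = 2 ^ a * ((p : ℤ) ^ e * (c : ℤ)) := by
      rw [hqz]; congr 1; exact_mod_cast (congrArg (Nat.cast (R := ℤ)) hbc).symm
    rw [hqz2, jacobiSym.mul_left, jacobiSym.pow_left, jacobiSym.mul_left, jacobiSym.pow_left]
    have h2 : jacobiSym 2 r = 1 := by
      rw [jacobiSym.at_two hrodd, ZMod.χ₈_nat_eq_if_mod_eight]
      simp [hr8]
      omega
    have hpr : jacobiSym (p : ℤ) r = -1 := by
      rw [jacobiSym.quadratic_reciprocity_one_mod_four' hpo hr4]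
      have hmod : (r : ℤ) % p = ((x.val : ℤ)) % p := by exact_mod_cast congrArg (Nat.cast (R := ℤ)) hrp
      rw [jacobiSym.mod_left' hmod, ← jacobiSym.legendreSym.to_jacobiSym]
      rw [legendreSym.eq_neg_one_iff]
      rwa [Int.cast_natCast, ZMod.natCast_val, ZMod.cast_id]
    have hcr : jacobiSym (c : ℤ) r = 1 := by
      rw [jacobiSym.quadratic_reciprocity_one_mod_four' hcodd hr4]
      have : (r : ℤ) % c = (1 : ℤ) % c := by exact_mod_cast congrArg (Nat.cast (R := ℤ)) hrc
      rw [jacobiSym.mod_left' this, jacobiSym.one_left]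
    rw [h2, hpr, hcr, one_pow, one_mul, mul_one, Odd.neg_one_pow hpodd]
end

section
/- Let q ≡ 0 mod 4 with q not a perfect square. Then for each σ ∈ {1, -1, i, -i}, the number of p ∈ (ℤ/qℤ)^× with ε_p · (q/p) = σ equals φ(q)/4, where ε_p = 1 if p ≡ 1 mod 4 and ε_p = i if p ≡ 3 mod 4, (q/p) is the Jacobi symbol, and φ is Euler's totient function. -/
open scoped NumberTheorySymbols
open ZMod

lemma sq_of_even_factorization (n : ℕ) (h0 : n ≠ 0) (h : ∀ p, Even (n.factorization p)) :
    IsSquare n := by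
  refine ⟨n.factorization.prod fun p k => p ^ (k / 2), ?_⟩
  conv_lhs => rw [← Nat.factorization_prod_pow_eq_self h0]
  rw [← Finsupp.prod_mul]
  refine Finsupp.prod_congr fun p hp => ?_
  obtain ⟨c, hc⟩ := h p
  rw [← pow_add, hc]
  congr 1
  omega

lemma exists_odd_factorization (m : ℕ) (h0 : m ≠ 0) (h : ¬ IsSquare m) :
    ∃ p, p.Prime ∧ Odd (m.factorization p) := by
  by_contra hc
  push_neg at hc
  refine h (sq_of_even_factorization m h0 fun p => ?_)
  by_cases hp : p.Prime
  · exact Nat.not_odd_iff_even.mp (hc p hp)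
  · simp [Nat.factorization_eq_zero_of_not_prime m hp]

lemma exists_jacobi_neg_odd {m : ℕ} (hm : m % 2 = 1) (hsq : ¬ IsSquare m) :
    ∃ a : ℕ, J((a : ℤ) | m) = -1 := by
  have hm0 : m ≠ 0 := by omega
  obtain ⟨p, hp, hodd⟩ := exists_odd_factorization m hm0 hsq
  haveI : Fact p.Prime := ⟨hp⟩
  have hk0 : m.factorization p ≠ 0 := by rcases hodd with ⟨c, hc⟩; omega
  have hpd : p ∣ m := Nat.dvd_of_factorization_pos hk0
  have hp2 : p ≠ 2 := by
    rintro rfl; obtain ⟨c, rfl⟩ := hpd; omega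
  -- nonsquare mod p
  obtain ⟨b, hb⟩ : ∃ b : ZMod p, ¬ IsSquare b := by
    refine FiniteField.exists_nonsquare ?_
    rwa [ZMod.ringChar_zmod_n]
  -- CRT
  set k := m.factorization p with hk
  set m₂ := m / p ^ k with hm₂
  have hmk : p ^ k * m₂ = m := Nat.ordProj_mul_ordCompl_eq_self m p
  have hm₂0 : m₂ ≠ 0 := (Nat.ordCompl_pos p hm0).ne'
  have hcop : Nat.Coprime p m₂ := Nat.coprime_ordCompl hp hm0
  obtain ⟨n, hn1, hn2⟩ := Nat.chineseRemainder hcop b.val 1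
  refine ⟨n, ?_⟩
  have hJp : J((n : ℤ) | p) = -1 := by
    rw [← jacobiSym.legendreSym.to_jacobiSym]
    rw [legendreSym.eq_neg_one_iff]
    have : ((n : ℕ) : ZMod p) = b := by
      rw [show ((n : ℕ) : ZMod p) = ((b.val : ℕ) : ZMod p) from
        (ZMod.natCast_eq_natCast_iff _ _ _).mpr hn1, ZMod.natCast_val, ZMod.cast_id]
    rw [Int.cast_natCast]; rwa [this]
  have hJm₂ : J((n : ℤ) | m₂) = 1 := by
    rw [jacobiSym.mod_left' (show ((n : ℕ) : ℤ) % m₂ = (1 : ℤ) % m₂ by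
      exact_mod_cast hn2), jacobiSym.one_left]
  calc J((n : ℤ) | m) = J((n : ℤ) | p ^ k * m₂) := by rw [hmk]
    _ = J((n : ℤ) | p ^ k) * J((n : ℤ) | m₂) :=
        jacobiSym.mul_right' _ (pow_ne_zero _ hp.ne_zero) hm₂0
    _ = (-1) ^ k * 1 := by rw [jacobiSym.pow_right, hJp, hJm₂]
    _ = -1 := by rw [hodd.neg_one_pow, mul_one]

lemma chi8_vals {n : ℕ} (hn : n % 2 = 1) : χ₈ (n : ZMod 8) = 1 ∨ χ₈ (n : ZMod 8) = -1 := by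
  rw [ZMod.χ₈_nat_eq_if_mod_eight]
  have : n % 8 = 1 ∨ n % 8 = 3 ∨ n % 8 = 5 ∨ n % 8 = 7 := by omega
  rcases this with h | h | h | h <;> simp [h, hn]

lemma chi8_sq {n : ℕ} (hn : n % 2 = 1) : (χ₈ (n : ZMod 8)) ^ 2 = 1 := by
  rcases chi8_vals hn with h | h <;> rw [h] <;> norm_num

lemma chi8_vals' {n : ℕ} (hn : n % 2 = 1) : χ₈ (n : ZMod 8) = 1 ∨ χ₈ (n : ZMod 8) = -1 :=
  chi8_vals hn

lemma mod_of_mod {q : ℕ} {n n' : ℕ} (d : ℕ) (hd : d ∣ q) (h : n % q = n' % q) :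
    n % d = n' % d := by
  rw [← Nat.mod_mod_of_dvd n hd, h, Nat.mod_mod_of_dvd n' hd]

lemma jac_decomp {e m : ℕ} (nn : ℕ) (hnn : nn % 2 = 1) :
    J(((2 ^ e * m : ℕ) : ℤ) | nn) = χ₈ (nn : ZMod 8) ^ e * J((m : ℤ) | nn) := by
  rw [show ((2 ^ e * m : ℕ) : ℤ) = (2 : ℤ) ^ e * (m : ℤ) by push_cast; ring,
    jacobiSym.mul_left, jacobiSym.pow_left, jacobiSym.at_two (Nat.odd_iff.mpr hnn)]

lemma coprime_of_jac_ne (q n : ℕ) (hn0 : n ≠ 0) (h : J((q : ℤ) | n) ≠ 0) :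
    Nat.Coprime n q := by
  haveI : NeZero n := ⟨hn0⟩
  have h1 : Int.gcd (q : ℤ) (n : ℤ) = 1 := by
    by_contra hg
    exact h (jacobiSym.eq_zero_iff_not_coprime.mpr hg)
  rw [Int.gcd_natCast_natCast] at h1
  exact Nat.coprime_comm.mp h1

lemma two_le_e {e m : ℕ} (hm2 : ¬ 2 ∣ m) (h4 : 4 ∣ 2 ^ e * m) : 2 ≤ e := by
  by_contra hlt
  push_neg at hlt
  interval_cases e
  · exact hm2 (dvd_trans (by norm_num : (2:ℕ) ∣ 4) (by simpa using h4))
  · obtain ⟨c, hc⟩ := h4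
    exact hm2 ⟨c, by omega⟩

lemma jac_periodic {q : ℕ} (h0 : q ≠ 0) (h4 : 4 ∣ q) {n n' : ℕ} (hn : n % 2 = 1)
    (hn' : n' % 2 = 1) (h : n % q = n' % q) : J((q : ℤ) | n) = J((q : ℤ) | n') := by
  obtain ⟨e, m, hm2, hqe⟩ := Nat.exists_eq_pow_mul_and_not_dvd h0 2 (by norm_num)
  have hm : m % 2 = 1 := by
    rcases Nat.mod_two_eq_zero_or_one m with hh | hh
    · exact absurd (Nat.dvd_of_mod_eq_zero hh) hm2
    · exact hh
  have he2 : 2 ≤ e := two_le_e hm2 (hqe ▸ h4)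
  have hd4 : n % 4 = n' % 4 := mod_of_mod 4 h4 h
  have hdm : n % m = n' % m := mod_of_mod m ⟨2 ^ e, by rw [hqe, mul_comm]⟩ h
  subst hqe
  rw [jac_decomp n hn, jac_decomp n' hn']
  have hJm : J((m : ℤ) | n) = J((m : ℤ) | n') := by
    rw [← jacobiSym.quadratic_reciprocity_if hm hn, ← jacobiSym.quadratic_reciprocity_if hm hn',
      hd4, jacobiSym.mod_left' (show ((n : ℕ) : ℤ) % m = ((n' : ℕ) : ℤ) % m by exact_mod_cast hdm)]
  rw [hJm]
  congr 1
  rcases Nat.even_or_odd e with he | he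
  · obtain ⟨c, rfl⟩ := he
    rw [show c + c = 2 * c by ring, pow_mul, pow_mul, chi8_sq hn, chi8_sq hn']
  · have h8 : (8 : ℕ) ∣ 2 ^ e * m := by
      refine dvd_mul_of_dvd_left ?_ m
      have : (2 : ℕ) ^ 3 ∣ 2 ^ e := pow_dvd_pow 2 (by rcases he with ⟨c, hc⟩; omega)
      simpa using this
    have : (n : ZMod 8) = (n' : ZMod 8) :=
      (ZMod.natCast_eq_natCast_iff' _ _ _).mpr (mod_of_mod 8 h8 h)
    rw [this]

lemma exists_good (q : ℕ) (h0 : q ≠ 0) (h4 : 4 ∣ q) (hsq : ¬ IsSquare q) :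
    ∃ n : ℕ, n % 4 = 1 ∧ Nat.Coprime n q ∧ J((q : ℤ) | n) = -1 := by
  obtain ⟨e, m, hm2, hqe⟩ := Nat.exists_eq_pow_mul_and_not_dvd h0 2 (by norm_num)
  have hm : m % 2 = 1 := by
    rcases Nat.mod_two_eq_zero_or_one m with hh | hh
    · exact absurd (Nat.dvd_of_mod_eq_zero hh) hm2
    · exact hh
  have he2 : 2 ≤ e := two_le_e hm2 (hqe ▸ h4)
  have hcop8m : Nat.Coprime 8 m := by
    have h2 : Nat.Coprime 2 m := (Nat.prime_two.coprime_iff_not_dvd).mpr hm2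
    simpa using h2.pow_left 3
  by_cases hms : IsSquare m
  · -- m square, e odd
    have he : Odd e := by
      rw [Nat.odd_iff, ← Nat.not_even_iff]
      intro hee
      obtain ⟨c, rfl⟩ := hee
      obtain ⟨r, hr⟩ := hms
      exact hsq ⟨2 ^ c * r, by rw [hqe, hr]; ring⟩
    obtain ⟨n, hn8, hnm⟩ := Nat.chineseRemainder hcop8m 5 1
    have h8 : n % 8 = 5 := by
      have := hn8; unfold Nat.ModEq at this; omega
    have hn4 : n % 4 = 1 := by omega
    have hodd : n % 2 = 1 := by omega
    have hJ : J((q : ℤ) | n) = -1 := by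
      rw [hqe, jac_decomp n hodd]
      have hχ : χ₈ (n : ZMod 8) = -1 := by
        rw [ZMod.χ₈_nat_eq_if_mod_eight]; simp [h8, hodd]
      have hJm : J((m : ℤ) | n) = 1 := by
        rw [jacobiSym.quadratic_reciprocity_one_mod_four' (Nat.odd_iff.mpr hm) hn4,
          jacobiSym.mod_left' (show ((n : ℕ) : ℤ) % m = (1 : ℤ) % m by exact_mod_cast hnm),
          jacobiSym.one_left]
      rw [hχ, hJm, he.neg_one_pow, mul_one]
    exact ⟨n, hn4, coprime_of_jac_ne q n (by omega) (by rw [hJ]; norm_num), hJ⟩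
  · -- m nonsquare
    obtain ⟨a, ha⟩ := exists_jacobi_neg_odd hm hms
    obtain ⟨n, hn8, hnm⟩ := Nat.chineseRemainder hcop8m 1 a
    have h8 : n % 8 = 1 := by
      have := hn8; unfold Nat.ModEq at this; omega
    have hn4 : n % 4 = 1 := by omega
    have hodd : n % 2 = 1 := by omega
    have hJ : J((q : ℤ) | n) = -1 := by
      rw [hqe, jac_decomp n hodd]
      have hχ : χ₈ (n : ZMod 8) = 1 := by
        rw [ZMod.χ₈_nat_eq_if_mod_eight]; simp [h8, hodd]
      have hJm : J((m : ℤ) | n) = -1 := by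
        rw [jacobiSym.quadratic_reciprocity_one_mod_four' (Nat.odd_iff.mpr hm) hn4,
          jacobiSym.mod_left' (show ((n : ℕ) : ℤ) % m = ((a : ℕ) : ℤ) % m by exact_mod_cast hnm)]
        exact ha
      rw [hχ, hJm, one_pow, one_mul]
    exact ⟨n, hn4, coprime_of_jac_ne q n (by omega) (by rw [hJ]; norm_num), hJ⟩

open Complex

noncomputable def FF (q : ℕ) (p : (ZMod q)ˣ) : ℂ :=
  (if ((p : ZMod q).val % 4 = 1) then (1 : ℂ) else Complex.I) *
    (jacobiSym (q : ℤ) ((p : ZMod q).val) : ℂ)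

variable {q : ℕ} [NeZero q]

lemma val_odd (hq4 : 4 ∣ q) (p : (ZMod q)ˣ) : ((p : ZMod q).val) % 2 = 1 := by
  have hc := ZMod.val_coe_unit_coprime p
  rcases Nat.mod_two_eq_zero_or_one ((p : ZMod q).val) with hh | hh
  · exfalso
    have h2 : (2 : ℕ) ∣ Nat.gcd ((p : ZMod q).val) q :=
      Nat.dvd_gcd (Nat.dvd_of_mod_eq_zero hh) (dvd_trans (by norm_num : (2:ℕ) ∣ 4) hq4)
    rw [Nat.Coprime] at hc
    omega
  · exact hh

lemma jac_pm (p : (ZMod q)ˣ) :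
    jacobiSym (q : ℤ) ((p : ZMod q).val) = 1 ∨ jacobiSym (q : ℤ) ((p : ZMod q).val) = -1 := by
  refine jacobiSym.eq_one_or_neg_one ?_
  have hc := ZMod.val_coe_unit_coprime p
  rw [Int.gcd_natCast_natCast]
  exact (Nat.coprime_comm.mp hc)

lemma FF_cases (hq4 : 4 ∣ q) (p : (ZMod q)ˣ) :
    (((p : ZMod q).val % 4 = 1) ∧ (FF q p = 1 ∨ FF q p = -1)) ∨
    (((p : ZMod q).val % 4 = 3) ∧ (FF q p = Complex.I ∨ FF q p = -Complex.I)) := by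
  have ho := val_odd hq4 p
  have hj := jac_pm p
  have h4 : ((p : ZMod q).val) % 4 = 1 ∨ ((p : ZMod q).val) % 4 = 3 := by omega
  unfold FF
  rcases h4 with h | h <;> rcases hj with hj | hj <;> simp [h, hj]

lemma FF_mul (hq4 : 4 ∣ q) (p u : (ZMod q)ˣ) :
    FF q (p * u) = FF q p * FF q u *
      (if ((p : ZMod q).val % 4 = 3 ∧ (u : ZMod q).val % 4 = 3) then -1 else 1) := by
  have hq0 : q ≠ 0 := NeZero.ne q
  have h2q : (2 : ℕ) ∣ q := dvd_trans (by norm_num) hq4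
  set a := (p : ZMod q).val with ha
  set b := (u : ZMod q).val with hb
  have hoa : a % 2 = 1 := val_odd hq4 p
  have hob : b % 2 = 1 := val_odd hq4 u
  have hval : ((p * u : (ZMod q)ˣ) : ZMod q).val = a * b % q := by
    rw [Units.val_mul, ZMod.val_mul]
  have hooab : (a * b) % 2 = 1 :=
    Nat.odd_iff.mp (Nat.odd_mul.mpr ⟨Nat.odd_iff.mpr hoa, Nat.odd_iff.mpr hob⟩)
  have hoab' : (a * b % q) % 2 = 1 := by
    rw [Nat.mod_mod_of_dvd _ h2q]; exact hooab
  have hJ : jacobiSym (q : ℤ) (((p * u : (ZMod q)ˣ) : ZMod q).val)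
      = jacobiSym (q : ℤ) a * jacobiSym (q : ℤ) b := by
    rw [hval]
    haveI : NeZero a := ⟨by omega⟩
    haveI : NeZero b := ⟨by omega⟩
    rw [jac_periodic hq0 hq4 hoab' hooab (Nat.mod_mod_of_dvd (a*b) (dvd_refl q)),
      jacobiSym.mul_right]
  have hmod4 : (((p * u : (ZMod q)ˣ) : ZMod q).val) % 4 = (a % 4) * (b % 4) % 4 := by
    rw [hval, Nat.mod_mod_of_dvd _ hq4, Nat.mul_mod]
  have h4a : a % 4 = 1 ∨ a % 4 = 3 := by omega
  have h4b : b % 4 = 1 ∨ b % 4 = 3 := by omega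
  unfold FF
  rw [hJ]
  rcases h4a with h1 | h1 <;> rcases h4b with h2 | h2 <;>
    rw [h1, h2] at hmod4 <;> norm_num at hmod4 <;>
    simp [hmod4, h1, h2, ← ha, ← hb] <;> push_cast <;> ring_nf <;>
    simp [Complex.I_sq]
  all_goals ring_nf

lemma neg_one_facts (hq4 : 4 ∣ q) :
    ((-1 : (ZMod q)ˣ) : ZMod q).val % 4 = 3 ∧ FF q (-1) = Complex.I := by
  have hq0 := NeZero.ne q
  obtain ⟨Q, hQ⟩ : ∃ Q, q = Q + 1 := ⟨q - 1, by omega⟩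
  have hval : ((-1 : (ZMod q)ˣ) : ZMod q).val = Q := by
    rw [Units.val_neg, Units.val_one]
    subst hQ
    exact ZMod.val_neg_one Q
  have hq43 : Q % 4 = 3 := by obtain ⟨c, hc⟩ := hq4; omega
  have hJ : jacobiSym (q : ℤ) Q = 1 := by
    rw [jacobiSym.mod_left' (show (q : ℤ) % Q = (1 : ℤ) % Q by
      rw [hQ]; push_cast
      rw [show ((Q : ℤ) + 1) = 1 + (Q : ℤ) * 1 by ring, Int.add_mul_emod_self_left]),
      jacobiSym.one_left]
  refine ⟨by rw [hval]; exact hq43, ?_⟩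
  unfold FF
  rw [hval, hq43, hJ]
  norm_num

lemma exists_u0 (hq4 : 4 ∣ q) (hsq : ¬ IsSquare q) :
    ∃ u : (ZMod q)ˣ, ((u : ZMod q).val % 4 = 1) ∧ FF q u = -1 := by
  obtain ⟨n, hn4, hcop, hJ⟩ := exists_good q (NeZero.ne q) hq4 hsq
  have hval : ((ZMod.unitOfCoprime n hcop : (ZMod q)ˣ) : ZMod q).val = n % q := by
    rw [ZMod.coe_unitOfCoprime, ZMod.val_natCast]
  have h41 : (n % q) % 4 = 1 := by rw [Nat.mod_mod_of_dvd _ hq4]; exact hn4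
  refine ⟨ZMod.unitOfCoprime n hcop, by rw [hval]; exact h41, ?_⟩
  have h2q : (2 : ℕ) ∣ q := dvd_trans (by norm_num) hq4
  have hJ' : jacobiSym (q : ℤ) (n % q) = -1 := by
    rw [jac_periodic (NeZero.ne q) hq4 (by
        rw [Nat.mod_mod_of_dvd _ h2q]; omega) (by omega : n % 2 = 1)
      (Nat.mod_mod_of_dvd n (dvd_refl q))]
    exact hJ
  unfold FF
  rw [hval, h41, hJ']
  norm_num

/-- If `q ≡ 0 mod 4` is not a square, then for each fourth root of unity `σ`,
the number of units `p` mod `q` with `ε_p (q/p) = σ` is `φ(q)/4`. -/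
theorem stmt_7 (q : ℕ) [NeZero q] (hq : q % 4 = 0) (hsq : ¬ IsSquare q)
    (σ : ℂ) (hσ : σ ∈ ({1, -1, Complex.I, -Complex.I} : Set ℂ)) :
    4 * Nat.card {p : (ZMod q)ˣ //
        (if ((p : ZMod q).val % 4 = 1) then (1 : ℂ) else Complex.I) *
          (jacobiSym (q : ℤ) ((p : ZMod q).val) : ℂ) = σ}
      = Nat.totient q := by
  classical
  have hq4 : 4 ∣ q := Nat.dvd_of_mod_eq_zero hq
  obtain ⟨u₀, hu01, hu0J⟩ := exists_u0 hq4 hsq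
  obtain ⟨hval3, hFFneg⟩ := neg_one_facts (q := q) hq4
  set N : ℂ → ℕ := fun v => Nat.card {p : (ZMod q)ˣ // FF q p = v} with hN
  show 4 * N σ = Nat.totient q
  have hIne : Complex.I ≠ 0 := Complex.I_ne_zero
  -- N v = N (-v)
  have hCneg : ∀ v : ℂ, N v = N (-v) := by
    intro v
    apply Nat.card_congr
    refine Equiv.subtypeEquiv (Equiv.mulRight u₀) fun p => ?_
    have hm := FF_mul hq4 p u₀
    rw [hu01] at hm
    norm_num at hm
    rw [hu0J] at hm
    simp only [Equiv.coe_mulRight]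
    constructor
    · intro h; rw [hm, h]; ring
    · intro h; rw [hm] at h
      have : FF q p = v := by linear_combination -h
      exact this
  -- N 1 = N I and N (-1) = N (-I)
  have hnegval : ∀ p : (ZMod q)ˣ, FF q (p * (-1)) = FF q p * Complex.I *
      (if ((p : ZMod q).val % 4 = 3) then -1 else 1) := by
    intro p
    have hm := FF_mul hq4 p (-1)
    rw [hval3, hFFneg] at hm
    simpa using hm
  have hI : N 1 = N Complex.I := by
    apply Nat.card_congr
    refine Equiv.subtypeEquiv (Equiv.mulRight (-1)) fun p => ?_
    have hm := hnegval p
    simp only [Equiv.coe_mulRight]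
    rcases FF_cases hq4 p with ⟨h4, hv⟩ | ⟨h4, hv⟩
    · rw [if_neg (by omega)] at hm
      constructor
      · intro h; rw [hm, h]; ring
      · intro h
        rw [hm] at h
        field_simp at h
        exact h
    · rw [if_pos h4] at hm
      constructor
      · intro h
        exfalso
        rcases hv with hv | hv <;> rw [hv] at h <;>
          norm_num [Complex.ext_iff] at h
      · intro h
        exfalso
        rw [hm] at h
        rcases hv with hv | hv <;> rw [hv] at h <;>
          simp [Complex.ext_iff, Complex.I_mul_I] at h <;> norm_num at h
  have hmI : N (-1) = N (-Complex.I) := by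
    apply Nat.card_congr
    refine Equiv.subtypeEquiv (Equiv.mulRight (-1)) fun p => ?_
    have hm := hnegval p
    simp only [Equiv.coe_mulRight]
    rcases FF_cases hq4 p with ⟨h4, hv⟩ | ⟨h4, hv⟩
    · rw [if_neg (by omega)] at hm
      constructor
      · intro h; rw [hm, h]; ring
      · intro h
        rw [hm] at h
        exact mul_right_cancel₀ hIne ((by ring : FF q p * Complex.I = FF q p * Complex.I * 1).trans
          (h.trans (by ring : -Complex.I = -1 * Complex.I)))
    · rw [if_pos h4] at hm
      constructor
      · intro h
        exfalso
        rcases hv with hv | hv <;> rw [hv] at h <;>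
          norm_num [Complex.ext_iff] at h
      · intro h
        exfalso
        rw [hm] at h
        rcases hv with hv | hv <;> rw [hv] at h <;>
          simp [Complex.ext_iff, Complex.I_mul_I] at h <;> norm_num at h
  -- partition
  have hfilter : ∀ v : ℂ, N v = (Finset.univ.filter (fun p => FF q p = v)).card := by
    intro v
    rw [show N v = Nat.card {p : (ZMod q)ˣ // FF q p = v} from rfl,
      Nat.card_eq_fintype_card]
    exact Fintype.card_subtype _
  have hcard : Nat.totient q = N 1 + N (-1) + N Complex.I + N (-Complex.I) := by
    have hfin : Fintype.card (ZMod q)ˣ =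
        ∑ v ∈ ({1, -1, Complex.I, -Complex.I} : Finset ℂ),
          (Finset.univ.filter (fun p => FF q p = v)).card := by
      apply Finset.card_eq_sum_card_fiberwise
      intro p _
      rcases FF_cases hq4 p with ⟨_, hv | hv⟩ | ⟨_, hv | hv⟩ <;> simp [hv]
    rw [← ZMod.card_units_eq_totient q, hfin]
    rw [Finset.sum_insert (by norm_num [Complex.ext_iff]),
      Finset.sum_insert (by norm_num [Complex.ext_iff]),
      Finset.sum_insert (by norm_num [Complex.ext_iff]),
      Finset.sum_singleton]
    rw [hfilter 1, hfilter (-1), hfilter Complex.I, hfilter (-Complex.I)]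
    ring
  have e3 := hCneg 1
  have e4 := hCneg Complex.I
  simp only [Set.mem_insert_iff, Set.mem_singleton_iff] at hσ
  rcases hσ with rfl | rfl | rfl | rfl <;> omega
end

section
/- If q ∈ ℕ is not a perfect square, then ∑_{p ∈ (ℤ/qℤ)^×} ε_p (q/p) = 0, where the sum is over odd representatives p of units mod q (for 4 | q all units are odd), ε_p = 1 if p ≡ 1 mod 4, ε_p = i if p ≡ 3 mod 4, and (q/p) is the Jacobi symbol. Assume q ≡ 0 mod 4. -/
open Finset Complex

open ZMod in
private lemma aux_chi8_sq {b : ℕ} (hb : Odd b) : χ₈ (b : ZMod 8) ^ 2 = 1 := by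
  have h := ZMod.χ₈_nat_eq_if_mod_eight b
  have hb2 : b % 2 = 1 := Nat.odd_iff.mp hb
  split_ifs at h with h1 h2
  · omega
  · rw [h]; norm_num
  · rw [h]; norm_num

/-- A positive natural number all of whose prime exponents are even, is a square;
contrapositive form. -/
private lemma aux_exists_odd_factorization_s10 {n : ℕ} (hn : n ≠ 0) (hsq : ¬ IsSquare n) :
    ∃ p : ℕ, p.Prime ∧ Odd (n.factorization p) := by
  by_contra h
  push_neg at h
  apply hsq
  refine ⟨n.factorization.prod fun p k => p ^ (k / 2), ?_⟩
  conv_lhs => rw [← Nat.factorization_prod_pow_eq_self hn]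
  rw [← Finsupp.prod_mul]
  refine Finsupp.prod_congr fun p hp => ?_
  have hpp : p.Prime := Nat.prime_of_mem_primeFactors (by simpa using hp)
  have he : ¬ Odd (n.factorization p) := h p hpp
  rw [Nat.not_odd_iff_even] at he
  rw [← pow_add]
  obtain ⟨c, hc⟩ := he
  congr 1
  omega

/-- Value formula: for `q = 2^e * m` with `m` odd and `b` odd,
`J(q|b) = χ₈(b)^e * qrSign b m * J(b|m)`. -/
private lemma aux_value (e m : ℕ) (hm : Odd m) {b : ℕ} (hb : Odd b) :
    jacobiSym ((2 ^ e * m : ℕ) : ℤ) b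
      = ZMod.χ₈ (b : ZMod 8) ^ e * qrSign b m * jacobiSym (b : ℤ) m := by
  rw [Nat.cast_mul, jacobiSym.mul_left, Nat.cast_pow, jacobiSym.pow_left, Nat.cast_ofNat,
    jacobiSym.at_two hb, jacobiSym.quadratic_reciprocity' hm hb]
  ring

/-- Periodicity: if `4 ∣ q`, the Jacobi symbol `J(q|b)` for odd `b` depends only on `b % q`. -/
private lemma aux_periodic {q : ℕ} [NeZero q] (hq : q % 4 = 0) {b b' : ℕ}
    (hb : Odd b) (hb' : Odd b') (h : b % q = b' % q) :
    jacobiSym (q : ℤ) b = jacobiSym (q : ℤ) b' := by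
  have hq0 : q ≠ 0 := NeZero.ne q
  have h4 : (4 : ℕ) ∣ q := Nat.dvd_of_mod_eq_zero hq
  set e := q.factorization 2 with hE
  set m := ordCompl[2] q with hM
  have hqem : 2 ^ e * m = q := Nat.ordProj_mul_ordCompl_eq_self q 2
  have hm : Odd m := Nat.not_even_iff_odd.mp fun hev => by
    exact Nat.not_dvd_ordCompl Nat.prime_two hq0 hev.two_dvd
  have he2 : 2 ≤ e := by
    rw [hE, ← Nat.Prime.pow_dvd_iff_le_factorization Nat.prime_two hq0]
    simpa using h4
  have hmq : m ∣ q := Nat.ordCompl_dvd q 2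
  -- value formulas
  rw [← hqem, aux_value e m hm hb, aux_value e m hm hb']
  -- compare the three factors
  have hb4 : b % 4 = b' % 4 := by
    rw [← Nat.mod_mod_of_dvd b h4, ← Nat.mod_mod_of_dvd b' h4, h]
  have hbm : b % m = b' % m := by
    rw [← Nat.mod_mod_of_dvd b hmq, ← Nat.mod_mod_of_dvd b' hmq, h]
  have hJ : jacobiSym (b : ℤ) m = jacobiSym (b' : ℤ) m := by
    refine jacobiSym.mod_left' ?_
    have := congrArg (Nat.cast : ℕ → ℤ) hbm
    push_cast at this
    simpa [Int.emod_emod_of_dvd] using this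
  have hqr : qrSign b m = qrSign b' m := by
    rw [qrSign, qrSign, ZMod.χ₄_nat_mod_four b, ZMod.χ₄_nat_mod_four b', hb4]
  have hχ : ZMod.χ₈ (b : ZMod 8) ^ e = ZMod.χ₈ (b' : ZMod 8) ^ e := by
    rcases eq_or_lt_of_le he2 with he | he
    · rw [← he, aux_chi8_sq hb, aux_chi8_sq hb']
    · have h8 : (8 : ℕ) ∣ q := by
        rw [← hqem]
        exact Dvd.dvd.mul_right (pow_dvd_pow 2 he) m
      have hb8 : b % 8 = b' % 8 := by
        rw [← Nat.mod_mod_of_dvd b h8, ← Nat.mod_mod_of_dvd b' h8, h]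
      rw [ZMod.χ₈_nat_mod_eight b, ZMod.χ₈_nat_mod_eight b', hb8]
  rw [hJ, hqr, hχ]

/-- Existence of a twisting element: if `q ≡ 0 mod 4` is not a square, there is `b ≡ 1 mod 4`
coprime to `q` with `J(q|b) = -1`. -/
private lemma aux_exists {q : ℕ} [NeZero q] (hq : q % 4 = 0) (hsq : ¬ IsSquare q) :
    ∃ b : ℕ, b % 4 = 1 ∧ Nat.Coprime b q ∧ jacobiSym (q : ℤ) b = -1 := by
  have hq0 : q ≠ 0 := NeZero.ne q
  have h4 : (4 : ℕ) ∣ q := Nat.dvd_of_mod_eq_zero hq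
  set e := q.factorization 2 with hE
  set m := ordCompl[2] q with hM
  have hqem : 2 ^ e * m = q := Nat.ordProj_mul_ordCompl_eq_self q 2
  have hm : Odd m := Nat.not_even_iff_odd.mp fun hev =>
    Nat.not_dvd_ordCompl Nat.prime_two hq0 hev.two_dvd
  have hm0 : m ≠ 0 := (Nat.ordCompl_pos 2 hq0).ne'
  haveI : NeZero m := ⟨hm0⟩
  have he2 : 2 ≤ e := by
    rw [hE, ← Nat.Prime.pow_dvd_iff_le_factorization Nat.prime_two hq0]
    simpa using h4
  by_cases hms : IsSquare m
  · -- `m` is a square, so `e` must be odd; take `b ≡ 5 mod 8`, `b ≡ 1 mod m`.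
    have he_odd : Odd e := by
      rw [← Nat.not_even_iff_odd]
      intro hev
      obtain ⟨c, hc⟩ := hms
      obtain ⟨k, hk⟩ := hev
      exact hsq ⟨2 ^ k * c, by rw [← hqem, hc, hk]; ring⟩
    have cop : Nat.Coprime 8 m := by
      have := (Nat.coprime_two_left.mpr hm).pow_left 3
      simpa using this
    obtain ⟨b, hb8, hbm⟩ := Nat.chineseRemainder cop 5 1
    have hb8' : b % 8 = 5 := by simpa [Nat.ModEq] using hb8
    have hb4 : b % 4 = 1 := by omega
    have hbodd : Odd b := by rw [Nat.odd_iff]; omega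
    have hbmZ : (b : ZMod m) = 1 := by
      have := (ZMod.natCast_eq_natCast_iff b 1 m).mpr hbm
      simpa using this
    have hbm_cop : Nat.Coprime b m := by
      rw [← ZMod.isUnit_iff_coprime, hbmZ]
      exact isUnit_one
    refine ⟨b, hb4, ?_, ?_⟩
    · rw [← hqem]
      exact Nat.Coprime.mul_right ((Nat.coprime_two_right.mpr hbodd).pow_right e) hbm_cop
    · rw [← hqem, aux_value e m hm hbodd]
      have h1 : ZMod.χ₈ (b : ZMod 8) = -1 := by
        rw [ZMod.χ₈_nat_mod_eight b, hb8']
        decide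
      have h2 : qrSign b m = 1 := by
        rw [qrSign, ZMod.χ₄_nat_one_mod_four hb4, jacobiSym.one_left]
      have h3 : jacobiSym (b : ℤ) m = 1 := by
        rw [jacobiSym.mod_left' (a₂ := 1) ?_, jacobiSym.one_left]
        have := congrArg (Nat.cast : ℕ → ℤ) hbm
        push_cast [Nat.ModEq] at this ⊢
        simpa using this
      rw [h1, h2, h3, Odd.neg_one_pow he_odd]
      ring
  · -- `m` is not a square: twist at an odd prime `ℓ` with odd exponent.
    obtain ⟨ℓ, hℓp, hv⟩ := aux_exists_odd_factorization_s10 hm0 hms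
    have hℓ2 : ℓ ≠ 2 := by
      rintro rfl
      rw [Nat.factorization_eq_zero_of_not_dvd
        (fun hdvd => Nat.not_dvd_ordCompl Nat.prime_two hq0 hdvd)] at hv
      simp [Nat.odd_iff] at hv
    set v := m.factorization ℓ with hV
    set m' := ordCompl[ℓ] m with hM'
    have hmv : ℓ ^ v * m' = m := Nat.ordProj_mul_ordCompl_eq_self m ℓ
    have hℓm' : ¬ ℓ ∣ m' := Nat.not_dvd_ordCompl hℓp hm0
    have hm'0 : m' ≠ 0 := (Nat.ordCompl_pos ℓ hm0).ne'
    haveI : NeZero m' := ⟨hm'0⟩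
    have hℓ_odd : Odd ℓ := hℓp.odd_of_ne_two hℓ2
    have hℓ0 : ℓ ≠ 0 := hℓp.ne_zero
    haveI : Fact ℓ.Prime := ⟨hℓp⟩
    haveI : NeZero ℓ := ⟨hℓ0⟩
    haveI : NeZero (ℓ ^ v) := ⟨pow_ne_zero v hℓ0⟩
    obtain ⟨c, hc⟩ := FiniteField.exists_nonsquare
      (F := ZMod ℓ) (by rw [ZMod.ringChar_zmod_n]; exact hℓ2)
    have hc0 : c ≠ 0 := fun h => hc (h ▸ ⟨0, by simp⟩)
    have hcop : Nat.Coprime ℓ (8 * m') := by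
      refine Nat.Coprime.mul_right ?_ (hℓp.coprime_iff_not_dvd.mpr hℓm')
      refine hℓp.coprime_iff_not_dvd.mpr fun hd => hℓ2 ?_
      have : ℓ ∣ 2 ^ 3 := by simpa using hd
      exact (Nat.prime_dvd_prime_iff_eq hℓp Nat.prime_two).mp (hℓp.dvd_of_dvd_pow this)
    obtain ⟨b, hbl, hbr⟩ := Nat.chineseRemainder hcop c.val 1
    have hb8 : b ≡ 1 [MOD 8] := hbr.of_dvd ⟨m', rfl⟩
    have hbm' : b ≡ 1 [MOD m'] := hbr.of_dvd ⟨8, mul_comm 8 m'⟩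
    have hb8' : b % 8 = 1 := by simpa [Nat.ModEq] using hb8
    have hb4 : b % 4 = 1 := by omega
    have hbodd : Odd b := by rw [Nat.odd_iff]; omega
    have hblZ : (b : ZMod ℓ) = c := by
      have := (ZMod.natCast_eq_natCast_iff b c.val ℓ).mpr hbl
      rwa [ZMod.natCast_rightInverse c] at this
    have hbl_cop : Nat.Coprime b ℓ := by
      rw [← ZMod.isUnit_iff_coprime, hblZ]
      exact isUnit_iff_ne_zero.mpr hc0
    have hbm'Z : (b : ZMod m') = 1 := by
      have := (ZMod.natCast_eq_natCast_iff b 1 m').mpr hbm'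
      simpa using this
    have hbm'_cop : Nat.Coprime b m' := by
      rw [← ZMod.isUnit_iff_coprime, hbm'Z]
      exact isUnit_one
    refine ⟨b, hb4, ?_, ?_⟩
    · rw [← hqem, ← hmv]
      exact Nat.Coprime.mul_right ((Nat.coprime_two_right.mpr hbodd).pow_right e)
        (Nat.Coprime.mul_right (hbl_cop.pow_right v) hbm'_cop)
    · rw [← hqem, aux_value e m hm hbodd]
      have h1 : ZMod.χ₈ (b : ZMod 8) = 1 := by
        rw [ZMod.χ₈_nat_mod_eight b, hb8']
        decide
      have h2 : qrSign b m = 1 := by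
        rw [qrSign, ZMod.χ₄_nat_one_mod_four hb4, jacobiSym.one_left]
      have h3 : jacobiSym (b : ℤ) m = -1 := by
        rw [← hmv, jacobiSym.mul_right, jacobiSym.pow_right]
        have hℓval : jacobiSym (b : ℤ) ℓ = -1 := by
          rw [jacobiSym.mod_left' (a₂ := (c.val : ℤ)) ?_]
          · rw [← jacobiSym.legendreSym.to_jacobiSym]
            refine (legendreSym.eq_neg_one_iff' ℓ).mpr ?_
            rwa [ZMod.natCast_rightInverse c]
          · have := congrArg (Nat.cast : ℕ → ℤ) hbl
            push_cast [Nat.ModEq] at this ⊢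
            simpa using this
        have hm'val : jacobiSym (b : ℤ) m' = 1 := by
          rw [jacobiSym.mod_left' (a₂ := 1) ?_, jacobiSym.one_left]
          have := congrArg (Nat.cast : ℕ → ℤ) hbm'
          push_cast [Nat.ModEq] at this ⊢
          simpa using this
        rw [hℓval, hm'val, Odd.neg_one_pow hv]
        ring
      rw [h1, h2, h3]
      ring

/-- If `q ≡ 0 mod 4` is not a square, then `∑_{p ∈ (ZMod q)ˣ} ε_p (q/p) = 0`. -/
theorem stmt_10 (q : ℕ) [NeZero q] (hq : q % 4 = 0) (hsq : ¬ IsSquare q) :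
    ∑ p : (ZMod q)ˣ,
        (if ((p : ZMod q).val % 4 = 1) then (1 : ℂ) else Complex.I) *
          (jacobiSym (q : ℤ) ((p : ZMod q).val) : ℂ)
      = 0 := by
  obtain ⟨b, hb4, hbcop, hbJ⟩ := aux_exists hq hsq
  have hq0 : q ≠ 0 := NeZero.ne q
  have h4 : (4 : ℕ) ∣ q := Nat.dvd_of_mod_eq_zero hq
  have h2 : (2 : ℕ) ∣ q := dvd_trans ⟨2, rfl⟩ h4
  have hbodd : Odd b := by rw [Nat.odd_iff]; omega
  have hb0 : b ≠ 0 := by have := Nat.odd_iff.mp hbodd; omega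
  haveI : NeZero b := ⟨hb0⟩
  set r : (ZMod q)ˣ := ZMod.unitOfCoprime b hbcop with hr
  set F : (ZMod q)ˣ → ℂ := fun p =>
    (if ((p : ZMod q).val % 4 = 1) then (1 : ℂ) else Complex.I) *
      (jacobiSym (q : ℤ) ((p : ZMod q).val) : ℂ) with hF
  have key : ∀ p : (ZMod q)ˣ, F (r * p) = - F p := by
    intro p
    have hx : Nat.Coprime ((p : ZMod q).val) q := ZMod.val_coe_unit_coprime p
    have hxodd : Odd ((p : ZMod q).val) :=
      Nat.coprime_two_right.mp (Nat.Coprime.coprime_dvd_right h2 hx)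
    set x := ((p : ZMod q)).val with hX
    have hx0 : x ≠ 0 := by have := Nat.odd_iff.mp hxodd; omega
    haveI : NeZero x := ⟨hx0⟩
    have hval : ((r * p : (ZMod q)ˣ) : ZMod q).val = (b % q * x) % q := by
      rw [Units.val_mul, ZMod.val_mul, hr, ZMod.coe_unitOfCoprime, ZMod.val_natCast]
    have hmod4 : ((r * p : (ZMod q)ˣ) : ZMod q).val % 4 = x % 4 := by
      rw [hval, Nat.mod_mod_of_dvd _ h4, Nat.mul_mod, Nat.mod_mod_of_dvd b h4, hb4]
      omega
    have hrpodd : Odd (((r * p : (ZMod q)ˣ) : ZMod q).val) :=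
      Nat.coprime_two_right.mp
        (Nat.Coprime.coprime_dvd_right h2 (ZMod.val_coe_unit_coprime (r * p)))
    have hmodq : ((r * p : (ZMod q)ˣ) : ZMod q).val % q = (b * x) % q := by
      rw [hval, Nat.mod_mod_of_dvd _ dvd_rfl]
      conv_rhs => rw [Nat.mul_mod, Nat.mod_eq_of_lt (ZMod.val_lt _)]
    have hJ : jacobiSym (q : ℤ) (((r * p : (ZMod q)ˣ) : ZMod q).val)
        = - jacobiSym (q : ℤ) x := by
      rw [aux_periodic hq hrpodd (hbodd.mul hxodd) hmodq, jacobiSym.mul_right, hbJ]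
      ring
    simp only [hF]
    rw [hmod4, hJ]
    push_cast
    ring
  have h1 : ∑ p : (ZMod q)ˣ, F (r * p) = ∑ p : (ZMod q)ˣ, F p :=
    Fintype.sum_equiv (Equiv.mulLeft r) _ _ (fun p => rfl)
  have h2' : ∑ p : (ZMod q)ˣ, F (r * p) = - ∑ p : (ZMod q)ˣ, F p := by
    simp_rw [key]
    exact Finset.sum_neg_distrib (f := F)
  have h3 : ∑ p : (ZMod q)ˣ, F p = - ∑ p : (ZMod q)ˣ, F p := h1.symm.trans h2'
  linear_combination h3 / 2
end

section
/- Let q ≡ 0 mod 4 with gcd(p,q) = 1, and let φ : ℝ → ℂ be 1-periodic with absolutely convergent Fourier series ∑_k φ̂_k e^{2πikx} satisfying ∑_k k²|φ̂_k| < ∞. Then g_φ(p,q) = g_1(p,q) · G_φ^+(-p̄/q), where g_φ(p,q) = ∑_{h=0}^{q-1} φ(h/q) e^{2πi p h²/q}, G_φ^+(x) = ∑_{n∈ℤ} φ̂_{2n} e^{2πi n² x}, and p̄ is the inverse of p mod q. -/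
open Finset Complex Real

section Aux

variable (q : ℕ)

noncomputable def ψa (m : ℤ) : ℂ :=
  Complex.exp (2 * Real.pi * Complex.I * (m : ℂ) / q)

lemma ψa_add (m n : ℤ) : ψa q (m + n) = ψa q m * ψa q n := by
  rw [ψa, ψa, ψa, ← Complex.exp_add]
  congr 1
  push_cast
  ring

lemma ψa_qmul (hq0 : 0 < q) (t : ℤ) : ψa q ((q : ℤ) * t) = 1 := by
  have hq : (q : ℂ) ≠ 0 := Nat.cast_ne_zero.mpr hq0.ne'
  rw [ψa]
  rw [show 2 * (Real.pi : ℂ) * Complex.I * (((q : ℤ) * t : ℤ) : ℂ) / q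
      = (t : ℤ) * (2 * Real.pi * Complex.I) by push_cast; field_simp]
  exact Complex.exp_int_mul_two_pi_mul_I t

/-- shift by one -/
lemma sum_shift_one (f : ℤ → ℂ) (hf : ∀ h : ℤ, f (h + q) = f h) :
    ∑ h ∈ Finset.range q, f ((h : ℤ) + 1) = ∑ h ∈ Finset.range q, f (h : ℤ) := by
  have h1 : ∑ h ∈ Finset.range (q + 1), f (h : ℤ)
      = ∑ h ∈ Finset.range q, f ((h : ℤ) + 1) + f 0 := by
    have e : ∑ h ∈ Finset.range q, f (((h + 1 : ℕ)) : ℤ)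
        = ∑ h ∈ Finset.range q, f ((h : ℤ) + 1) :=
      Finset.sum_congr rfl fun h _ => by norm_cast
    rw [Finset.sum_range_succ' (fun h : ℕ => f (h : ℤ)) q, e]
    norm_num
  have h2 : ∑ h ∈ Finset.range (q + 1), f (h : ℤ)
      = ∑ h ∈ Finset.range q, f (h : ℤ) + f q := Finset.sum_range_succ _ q
  have h3 : f (q : ℤ) = f 0 := by simpa using hf 0
  rw [h1, h3] at h2
  exact add_right_cancel h2

/-- shift by any integer -/
lemma sum_shift (f : ℤ → ℂ) (hf : ∀ h : ℤ, f (h + q) = f h) (a : ℤ) :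
    ∑ h ∈ Finset.range q, f ((h : ℤ) + a) = ∑ h ∈ Finset.range q, f (h : ℤ) := by
  induction a using Int.induction_on with
  | zero => simp
  | succ a ih =>
      have key := sum_shift_one q (fun h => f (h + a)) (fun h => by
        show f (h + (q : ℤ) + a) = f (h + a)
        rw [show h + (q : ℤ) + a = h + a + q by ring, hf])
      have a1 : ∑ h ∈ Finset.range q, f ((h : ℤ) + ((a : ℤ) + 1))
          = ∑ h ∈ Finset.range q, f ((h : ℤ) + 1 + a) :=
        Finset.sum_congr rfl fun h _ => by rw [show (h : ℤ) + ((a : ℤ) + 1) = (h : ℤ) + 1 + a by ring]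
      rw [a1, key, ih]
  | pred a ih =>
      have key := sum_shift_one q (fun h => f (h + (-(a : ℤ) - 1))) (fun h => by
        show f (h + (q : ℤ) + (-(a : ℤ) - 1)) = f (h + (-(a : ℤ) - 1))
        rw [show h + (q : ℤ) + (-(a : ℤ) - 1) = h + (-(a : ℤ) - 1) + q by ring, hf])
      have a2 : ∑ h ∈ Finset.range q, f ((h : ℤ) + 1 + (-(a : ℤ) - 1))
          = ∑ h ∈ Finset.range q, f ((h : ℤ) + -(a : ℤ)) :=
        Finset.sum_congr rfl fun h _ => by rw [show (h : ℤ) + 1 + (-(a : ℤ) - 1) = (h : ℤ) + -(a : ℤ) by ring]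
      rw [← key, a2, ih]

end Aux

/-- Functional equation for `q ≡ 0 mod 4`: `g_φ(p,q) = g₁(p,q) · G_φ⁺(-p̄/q)`. -/
theorem stmt_13 (q : ℕ) (hq0 : 0 < q) (hq : q % 4 = 0) (p : ℤ)
    (hp : Int.gcd p (q : ℤ) = 1)
    (pbar : ℤ) (hpbar : p * pbar ≡ 1 [ZMOD (q : ℤ)])
    (φ : ℝ → ℂ) (c : ℤ → ℂ)
    (hc : Summable fun k : ℤ => (k : ℝ) ^ 2 * ‖c k‖)
    (hφ : ∀ x : ℝ, HasSum (fun k : ℤ => c k * Complex.exp (2 * Real.pi * Complex.I * (k : ℂ) * (x : ℂ))) (φ x)) :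
    ∑ h ∈ Finset.range q, φ ((h : ℝ) / q) *
        Complex.exp (2 * Real.pi * Complex.I * (p : ℂ) * (h : ℂ) ^ 2 / q)
      = (∑ h ∈ Finset.range q,
          Complex.exp (2 * Real.pi * Complex.I * (p : ℂ) * (h : ℂ) ^ 2 / q)) *
        ∑' n : ℤ, c (2 * n) *
          Complex.exp (2 * Real.pi * Complex.I * (n : ℂ) ^ 2 * (-(pbar : ℂ) / q)) := by
  have hqC : (q : ℂ) ≠ 0 := Nat.cast_ne_zero.mpr hq0.ne'
  -- q = 4r
  obtain ⟨r, hr⟩ : ∃ r : ℕ, q = 4 * r := ⟨q / 4, (Nat.div_mul_cancel (Nat.dvd_of_mod_eq_zero hq)).symm ▸ by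
    omega⟩
  -- p * pbar = 1 + q * m
  obtain ⟨m, hm⟩ : ∃ m : ℤ, p * pbar = 1 + (q : ℤ) * m := by
    have := Int.ModEq.dvd hpbar   -- q ∣ 1 - p*pbar
    obtain ⟨t, ht⟩ := this
    exact ⟨-t, by linarith⟩
  -- summability of c
  have hsum_c : Summable c := by
    have := (hφ 0).summable
    simpa using this
  have hnorm_c : Summable fun k : ℤ => ‖c k‖ := hsum_c.norm
  -- abbreviations
  set ψ : ℤ → ℂ := ψa q with hψ
  have ψ_add : ∀ m n : ℤ, ψ (m + n) = ψ m * ψ n := ψa_add q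
  have ψ_qmul : ∀ t : ℤ, ψ ((q : ℤ) * t) = 1 := ψa_qmul q hq0
  -- the inner Gauss-type sum
  set S : ℤ → ℂ := fun k => ∑ h ∈ Finset.range q, ψ (p * (h : ℤ) ^ 2 + k * h) with hS
  -- step 1: LHS = ∑' k, c k * S k
  have exp_eq : ∀ (h : ℕ) (k : ℤ),
      c k * Complex.exp (2 * Real.pi * Complex.I * (k : ℂ) * (((h : ℝ) / q : ℝ) : ℂ)) *
        Complex.exp (2 * Real.pi * Complex.I * (p : ℂ) * (h : ℂ) ^ 2 / q)
      = c k * ψ (p * (h : ℤ) ^ 2 + k * h) := by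
    intro h k
    rw [hψ, ψa, mul_assoc, ← Complex.exp_add]
    congr 2
    push_cast
    field_simp
    ring
  have step1 : ∑ h ∈ Finset.range q, φ ((h : ℝ) / q) *
        Complex.exp (2 * Real.pi * Complex.I * (p : ℂ) * (h : ℂ) ^ 2 / q)
      = ∑' k : ℤ, c k * S k := by
    have hsummand : ∀ h ∈ Finset.range q, Summable fun k : ℤ =>
        c k * Complex.exp (2 * Real.pi * Complex.I * (k : ℂ) * (((h : ℝ) / q : ℝ) : ℂ)) *
          Complex.exp (2 * Real.pi * Complex.I * (p : ℂ) * (h : ℂ) ^ 2 / q) := by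
      intro h _
      apply Summable.mul_right
      apply Summable.of_norm
      have heq : ∀ k : ℤ, ‖c k * Complex.exp (2 * Real.pi * Complex.I * (k : ℂ) * (((h : ℝ) / q : ℝ) : ℂ))‖ = ‖c k‖ := by
        intro k
        rw [norm_mul]
        rw [show (2 : ℂ) * Real.pi * Complex.I * (k : ℂ) * (((h : ℝ) / q : ℝ) : ℂ)
            = ((2 * Real.pi * k * ((h : ℝ) / q) : ℝ) : ℂ) * Complex.I by push_cast; ring]
        rw [Complex.norm_exp_ofReal_mul_I]
        ring
      exact (summable_congr heq).mpr hnorm_c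
    calc ∑ h ∈ Finset.range q, φ ((h : ℝ) / q) *
          Complex.exp (2 * Real.pi * Complex.I * (p : ℂ) * (h : ℂ) ^ 2 / q)
        = ∑ h ∈ Finset.range q, ∑' k : ℤ,
            c k * Complex.exp (2 * Real.pi * Complex.I * (k : ℂ) * (((h : ℝ) / q : ℝ) : ℂ)) *
              Complex.exp (2 * Real.pi * Complex.I * (p : ℂ) * (h : ℂ) ^ 2 / q) := by
          apply Finset.sum_congr rfl
          intro h _
          rw [← (hφ ((h : ℝ) / q)).tsum_eq, ← tsum_mul_right]
      _ = ∑' k : ℤ, ∑ h ∈ Finset.range q,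
            c k * Complex.exp (2 * Real.pi * Complex.I * (k : ℂ) * (((h : ℝ) / q : ℝ) : ℂ)) *
              Complex.exp (2 * Real.pi * Complex.I * (p : ℂ) * (h : ℂ) ^ 2 / q) :=
          (Summable.tsum_finsetSum hsummand).symm
      _ = ∑' k : ℤ, c k * S k := by
          apply tsum_congr
          intro k
          rw [hS, Finset.mul_sum]
          apply Finset.sum_congr rfl
          intro h _
          exact exp_eq h k
  -- periodicity helpers
  have per_quad : ∀ (k h : ℤ), ψ (p * (h + q) ^ 2 + k * (h + q)) = ψ (p * h ^ 2 + k * h) := by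
    intro k h
    rw [show p * (h + q) ^ 2 + k * (h + q) = (p * h ^ 2 + k * h) + (q : ℤ) * (2 * p * h + p * q + k) by ring,
      ψ_add, ψ_qmul, mul_one]
  -- step 2a: S k = 0 for odd k
  have odd_case : ∀ k : ℤ, k % 2 = 1 → S k = 0 := by
    intro k hk
    obtain ⟨j, hj⟩ : ∃ j : ℤ, k = 2 * j + 1 := ⟨k / 2, by omega⟩
    have key : ∀ h : ℤ, ψ (p * (h + 2 * r) ^ 2 + k * (h + 2 * r)) = - ψ (p * h ^ 2 + k * h) := by
      intro h
      rw [show p * (h + 2 * r) ^ 2 + k * (h + 2 * r)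
          = (p * h ^ 2 + k * h) + (q : ℤ) * (p * h + p * r + j) + 2 * r by
            rw [hj]; push_cast [hr]; ring,
        ψ_add, ψ_add, ψ_qmul, mul_one]
      have : ψ (2 * r) = -1 := by
        rw [hψ, ψa]
        rw [show 2 * (Real.pi : ℂ) * Complex.I * (((2 * r : ℤ)) : ℂ) / q = (Real.pi : ℂ) * Complex.I by
          push_cast [hr]
          have hrC : (r : ℂ) ≠ 0 := by
            rw [hr] at hqC; push_cast at hqC; intro h0; rw [h0] at hqC; simp at hqC
          field_simp
          ring]
        exact Complex.exp_pi_mul_I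
      rw [this]
      ring
    have : S k = - S k := by
      rw [hS]
      calc ∑ h ∈ Finset.range q, ψ (p * (h : ℤ) ^ 2 + k * h)
          = ∑ h ∈ Finset.range q, ψ (p * ((h : ℤ) + 2 * r) ^ 2 + k * ((h : ℤ) + 2 * r)) := by
            exact (sum_shift q (fun h => ψ (p * h ^ 2 + k * h)) (per_quad k) (2 * r)).symm
        _ = ∑ h ∈ Finset.range q, - ψ (p * (h : ℤ) ^ 2 + k * h) := by
            apply Finset.sum_congr rfl; intro h _; exact key h
        _ = - ∑ h ∈ Finset.range q, ψ (p * (h : ℤ) ^ 2 + k * h) := by rw [Finset.sum_neg_distrib]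
    have h2 : (2 : ℂ) * S k = 0 := by linear_combination this
    have := mul_eq_zero.mp h2
    rcases this with h | h
    · norm_num at h
    · exact h
  -- step 2b: S (2n) = ψ(-pbar n²) * S₀
  have even_case : ∀ n : ℤ, S (2 * n) = ψ (-(pbar * n ^ 2)) * S 0 := by
    intro n
    have key : ∀ h : ℤ, ψ (p * h ^ 2 + 2 * n * h)
        = ψ (-(pbar * n ^ 2)) * ψ (p * (h + pbar * n) ^ 2) := by
      intro h
      rw [show p * h ^ 2 + 2 * n * h
          = -(pbar * n ^ 2) + (p * (h + pbar * n) ^ 2 + (q : ℤ) * (-(2 * m * n * h) - m * pbar * n ^ 2)) by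
            linear_combination (-(2 * n * h) - pbar * n ^ 2) * hm]
      rw [ψ_add, ψ_add, ψ_qmul, mul_one]
    have per0 : ∀ h : ℤ, ψ (p * (h + q) ^ 2) = ψ (p * h ^ 2) := by
      intro h
      have := per_quad 0 h
      simpa using this
    calc S (2 * n) = ∑ h ∈ Finset.range q, ψ (p * (h : ℤ) ^ 2 + 2 * n * h) := rfl
      _ = ∑ h ∈ Finset.range q, ψ (-(pbar * n ^ 2)) * ψ (p * ((h : ℤ) + pbar * n) ^ 2) := by
          apply Finset.sum_congr rfl; intro h _; exact key h
      _ = ψ (-(pbar * n ^ 2)) * ∑ h ∈ Finset.range q, ψ (p * ((h : ℤ) + pbar * n) ^ 2) := by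
          rw [← Finset.mul_sum]
      _ = ψ (-(pbar * n ^ 2)) * ∑ h ∈ Finset.range q, ψ (p * (h : ℤ) ^ 2) := by
          rw [sum_shift q (fun h => ψ (p * h ^ 2)) per0 (pbar * n)]
      _ = ψ (-(pbar * n ^ 2)) * S 0 := by rw [hS]; simp
  -- step 3: tsum over evens
  have hinj : Function.Injective (fun n : ℤ => 2 * n) := fun a b h => by
    have : (2 : ℤ) * a = 2 * b := h
    omega
  have hsupp : Function.support (fun k : ℤ => c k * S k) ⊆ Set.range (fun n : ℤ => 2 * n) := by
    intro k hk
    by_contra hkr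
    apply hk
    have hodd : k % 2 = 1 := by
      rcases Int.emod_two_eq_zero_or_one k with h | h
      · exact absurd ⟨k / 2, show (2 : ℤ) * (k / 2) = k by omega⟩ hkr
      · exact h
    simp [odd_case k hodd]
  have step3 : ∑' k : ℤ, c k * S k = ∑' n : ℤ, c (2 * n) * S (2 * n) :=
    (hinj.tsum_eq hsupp).symm
  -- identify ψ with RHS exponential & S 0 with Gauss sum
  have hS0 : S 0 = ∑ h ∈ Finset.range q,
      Complex.exp (2 * Real.pi * Complex.I * (p : ℂ) * (h : ℂ) ^ 2 / q) := by
    rw [hS]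
    apply Finset.sum_congr rfl
    intro h _
    rw [hψ, ψa]
    congr 1
    push_cast
    ring
  have hψn : ∀ n : ℤ, ψ (-(pbar * n ^ 2))
      = Complex.exp (2 * Real.pi * Complex.I * (n : ℂ) ^ 2 * (-(pbar : ℂ) / q)) := by
    intro n
    rw [hψ, ψa]
    congr 1
    push_cast
    ring
  rw [step1, step3]
  calc ∑' n : ℤ, c (2 * n) * S (2 * n)
      = ∑' n : ℤ, S 0 * (c (2 * n) *
          Complex.exp (2 * Real.pi * Complex.I * (n : ℂ) ^ 2 * (-(pbar : ℂ) / q))) := by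
        apply tsum_congr
        intro n
        rw [even_case n, hψn n]
        ring
    _ = S 0 * ∑' n : ℤ, c (2 * n) *
          Complex.exp (2 * Real.pi * Complex.I * (n : ℂ) ^ 2 * (-(pbar : ℂ) / q)) := tsum_mul_left
    _ = _ := by rw [hS0]
end

section
/- Let q ≡ 2 mod 4 with gcd(p,q) = 1, and φ : ℝ → ℂ be 1-periodic with Fourier coefficients φ̂_k satisfying ∑_k k²|φ̂_k| < ∞. Then g_φ(p,q) = 2 g_1(2p, q/2) · G_φ^-(-\overline{8p}/(q/2)), where G_φ^-(x) = ∑_{n odd} φ̂_n e^{2πi n² x} and \overline{8p} is the inverse of 8p modulo q/2. -/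
open Finset Complex Real

private lemma exp_int_aux (n : ℤ) : Complex.exp (2 * (Real.pi:ℂ) * Complex.I * (n:ℂ)) = 1 := by
  rw [show 2 * (Real.pi:ℂ) * Complex.I * (n:ℂ) = (n:ℂ) * (2 * (Real.pi:ℂ) * Complex.I) by ring]
  exact Complex.exp_int_mul_two_pi_mul_I n

private lemma exp_congr_aux (N : ℕ) [NeZero N] {a b : ℤ} (h : a ≡ b [ZMOD (N:ℤ)]) :
    Complex.exp (2 * (Real.pi:ℂ) * Complex.I * (a:ℂ) / (N:ℂ))
    = Complex.exp (2 * (Real.pi:ℂ) * Complex.I * (b:ℂ) / (N:ℂ)) := by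
  obtain ⟨t, ht⟩ := h.dvd
  have hb : b = a + (N:ℤ) * t := by linarith
  have hN : (N:ℂ) ≠ 0 := Nat.cast_ne_zero.mpr (NeZero.ne N)
  rw [hb]
  rw [show 2 * (Real.pi:ℂ) * Complex.I * ((a + (N:ℤ)*t : ℤ):ℂ) / (N:ℂ)
      = 2 * (Real.pi:ℂ) * Complex.I * (a:ℂ) / (N:ℂ) + 2 * (Real.pi:ℂ) * Complex.I * ((t:ℤ):ℂ) by
    push_cast; field_simp]
  rw [Complex.exp_add, exp_int_aux, mul_one]

noncomputable def eC (N : ℕ) (x : ZMod N) : ℂ :=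
  Complex.exp (2 * (Real.pi:ℂ) * Complex.I * (x.val : ℂ) / (N:ℂ))

lemma eC_int (N : ℕ) [NeZero N] (a : ℤ) :
    eC N ((a : ZMod N)) = Complex.exp (2 * (Real.pi:ℂ) * Complex.I * (a:ℂ) / (N:ℂ)) := by
  have h : (((a : ZMod N).val : ℤ)) ≡ a [ZMOD (N:ℤ)] := by
    rw [ZMod.val_intCast]
    exact Int.emod_emod_of_dvd a dvd_rfl
  have := exp_congr_aux N h
  simpa [eC] using this

lemma val_intCast_cast (N : ℕ) [NeZero N] (b : ZMod N) : (((b.val : ℤ) : ZMod N)) = b := by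
  push_cast
  simp [ZMod.natCast_val, ZMod.cast_id]

lemma eC_add (N : ℕ) [NeZero N] (x y : ZMod N) : eC N (x + y) = eC N x * eC N y := by
  rw [← val_intCast_cast N x, ← val_intCast_cast N y, ← Int.cast_add, eC_int, eC_int, eC_int,
    ← Complex.exp_add]
  congr 1
  push_cast
  ring

lemma sum_range_zmod (N : ℕ) [NeZero N] (f : ZMod N → ℂ) :
    ∑ h ∈ Finset.range N, f ((h : ℕ) : ZMod N) = ∑ x : ZMod N, f x := by
  refine Finset.sum_nbij' (fun h => ((h : ℕ) : ZMod N)) (fun x => x.val) ?_ ?_ ?_ ?_ ?_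
  · intro a _; exact Finset.mem_univ _
  · intro a _; exact Finset.mem_range.mpr (ZMod.val_lt a)
  · intro a ha; exact ZMod.val_natCast_of_lt (Finset.mem_range.mp ha)
  · intro a _; simp [ZMod.natCast_val, ZMod.cast_id]
  · intro a _; rfl

lemma lemA (m : ℕ) [NeZero m] (p w k : ℤ) (h8 : ((8*p*w : ℤ) : ZMod m) = 1) :
    ∑ b : ZMod m, eC m (((2*p : ℤ) : ZMod m) * b^2 + ((k : ℤ) : ZMod m) * b)
    = eC m (((-(w*k^2)) : ℤ)) * ∑ b : ZMod m, eC m (((2*p : ℤ) : ZMod m) * b^2) := by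
  rw [Finset.mul_sum]
  have hre := Fintype.sum_equiv (Equiv.addRight (((2*w*k : ℤ)) : ZMod m))
      (fun b => eC m (((-(w*k^2)) : ℤ)) * eC m (((2*p : ℤ) : ZMod m) * (b + ((2*w*k : ℤ) : ZMod m))^2))
      (fun b => eC m (((-(w*k^2)) : ℤ)) * eC m (((2*p : ℤ) : ZMod m) * b^2)) (fun b => rfl)
  rw [← hre]
  refine Finset.sum_congr rfl fun b _ => ?_
  show _ = eC m (((-(w*k^2)) : ℤ)) * eC m (((2*p : ℤ) : ZMod m) * (b + ((2*w*k : ℤ) : ZMod m))^2)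
  rw [← eC_add]
  congr 1
  push_cast at h8 ⊢
  linear_combination (-((k:ZMod m)*b) - (w:ZMod m)*(k:ZMod m)^2) * h8

lemma lemBcore (m : ℕ) [NeZero m] (hm : m % 2 = 1) (p k : ℤ) :
    ∑ x : ZMod (2*m), eC (2*m) ((p : ZMod (2*m)) * x^2 + ((k:ℤ) : ZMod (2*m)) * x)
    = (1 + Complex.exp (2*(Real.pi:ℂ)*Complex.I*((p*(m:ℤ)+k : ℤ):ℂ)/2)) *
      ∑ b : ZMod m, eC m (((2*p : ℤ) : ZMod m) * b^2 + ((k:ℤ) : ZMod m) * b) := by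
  haveI : NeZero (2*m) := ⟨by have := NeZero.ne m; omega⟩
  set f : ZMod 2 × ZMod m → ZMod (2*m) :=
    fun z => (((m:ℤ) * (z.1.val : ℤ) + 2 * (z.2.val : ℤ) : ℤ) : ZMod (2*m)) with hf
  have hinj : Function.Injective f := by
    intro z z' h
    have h2 : (2 : ℕ) ∣ 2*m := ⟨m, rfl⟩
    have hmd : m ∣ 2*m := ⟨2, by ring⟩
    have e2 := congrArg (ZMod.castHom h2 (ZMod 2)) h
    have em := congrArg (ZMod.castHom hmd (ZMod m)) h
    simp only [hf, map_intCast] at e2 em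
    have hm2 : ((m : ℕ) : ZMod 2) = 1 := by
      rw [← ZMod.natCast_mod m 2, hm]; norm_num
    have hmm : ((m : ℕ) : ZMod m) = 0 := ZMod.natCast_self m
    push_cast at e2 em
    rw [hm2] at e2
    rw [hmm] at em
    simp only [ZMod.natCast_val, ZMod.cast_id, one_mul, zero_mul, zero_add] at e2 em
    have h22 : (2 : ZMod 2) = 0 := by decide
    rw [h22, zero_mul, add_zero, zero_mul, add_zero] at e2
    have hu : IsUnit (2 : ZMod m) := by
      have : ((2:ℕ) : ZMod m) = (2 : ZMod m) := by norm_num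
      rw [← this]
      exact (ZMod.isUnit_iff_coprime 2 m).mpr ((Nat.prime_two.coprime_iff_not_dvd).mpr (by omega))
    have e2' : z.1 = z'.1 := e2
    have em' : z.2 = z'.2 := hu.mul_right_injective em
    exact Prod.ext e2' em'
  have hbij : Function.Bijective f :=
    (Fintype.bijective_iff_injective_and_card f).mpr ⟨hinj, by simp [ZMod.card]⟩
  have hm0 : (m:ℂ) ≠ 0 := Nat.cast_ne_zero.mpr (NeZero.ne m)
  have key : ∀ z : ZMod 2 × ZMod m,
      eC (2*m) ((p : ZMod (2*m)) * (f z)^2 + ((k:ℤ) : ZMod (2*m)) * (f z))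
      = Complex.exp (2*(Real.pi:ℂ)*Complex.I*((p*(m:ℤ)+k : ℤ):ℂ)*((z.1.val : ℤ):ℂ)/2) *
        eC m (((2*p : ℤ) : ZMod m) * z.2^2 + ((k:ℤ) : ZMod m) * z.2) := by
    rintro ⟨a, b⟩
    set A : ℤ := (a.val : ℤ) with hA
    set B : ℤ := (b.val : ℤ) with hB
    have h1 : (p : ZMod (2*m)) * (f (a,b))^2 + ((k:ℤ) : ZMod (2*m)) * (f (a,b))
        = (((p*((m:ℤ)*A+2*B)^2 + k*((m:ℤ)*A+2*B)) : ℤ) : ZMod (2*m)) := by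
      simp only [hf]; push_cast; simp only [hA, hB]; push_cast; ring
    have h2 : ((2*p : ℤ) : ZMod m) * b^2 + ((k:ℤ) : ZMod m) * b
        = (((2*p*B^2 + k*B) : ℤ) : ZMod m) := by
      conv_lhs => rw [← val_intCast_cast m b]
      push_cast; simp only [hA, hB]; push_cast; ring
    rw [h1, h2, eC_int, eC_int]
    rw [← Complex.exp_add]
    have hAcase : A = 0 ∨ A = 1 := by
      have := a.val_lt; omega
    have harg : 2*(Real.pi:ℂ)*Complex.I*(((p*((m:ℤ)*A+2*B)^2 + k*((m:ℤ)*A+2*B)) : ℤ):ℂ)/((2*m:ℕ):ℂ)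
        = (2*(Real.pi:ℂ)*Complex.I*((p*(m:ℤ)+k : ℤ):ℂ)*((A:ℤ):ℂ)/2
            + 2*(Real.pi:ℂ)*Complex.I*(((2*p*B^2 + k*B) : ℤ):ℂ)/((m:ℕ):ℂ))
          + 2*(Real.pi:ℂ)*Complex.I*(((2*p*A*B) : ℤ):ℂ) := by
      rcases hAcase with h | h <;> rw [h] <;> push_cast <;> field_simp <;> ring
    rw [harg, Complex.exp_add, exp_int_aux, mul_one]
  calc ∑ x : ZMod (2*m), eC (2*m) ((p : ZMod (2*m)) * x^2 + ((k:ℤ) : ZMod (2*m)) * x)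
      = ∑ z : ZMod 2 × ZMod m,
          (Complex.exp (2*(Real.pi:ℂ)*Complex.I*((p*(m:ℤ)+k : ℤ):ℂ)*((z.1.val : ℤ):ℂ)/2) *
            eC m (((2*p : ℤ) : ZMod m) * z.2^2 + ((k:ℤ) : ZMod m) * z.2)) := by
        refine (Fintype.sum_bijective f hbij _ _ fun z => ?_).symm
        exact (key z).symm
    _ = (∑ a : ZMod 2, Complex.exp (2*(Real.pi:ℂ)*Complex.I*((p*(m:ℤ)+k : ℤ):ℂ)*((a.val : ℤ):ℂ)/2)) *
        ∑ b : ZMod m, eC m (((2*p : ℤ) : ZMod m) * b^2 + ((k:ℤ) : ZMod m) * b) := by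
        rw [Fintype.sum_prod_type, Finset.sum_mul]
        exact Finset.sum_congr rfl fun a _ => by rw [Finset.mul_sum]
    _ = _ := by
        congr 1
        have huniv : (Finset.univ : Finset (ZMod 2)) = {0, 1} := by decide
        rw [huniv, Finset.sum_insert (by decide), Finset.sum_singleton]
        have hv0 : ((0 : ZMod 2)).val = 0 := rfl
        have hv1 : ((1 : ZMod 2)).val = 1 := rfl
        rw [hv0, hv1]
        norm_num

lemma lemB_even (m : ℕ) [NeZero m] (hm : m % 2 = 1) (p k : ℤ) (hpo : p % 2 = 1) (hk : k % 2 = 0) :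
    ∑ x : ZMod (2*m), eC (2*m) ((p : ZMod (2*m)) * x^2 + ((k:ℤ) : ZMod (2*m)) * x) = 0 := by
  rw [lemBcore m hm p k]
  have hm' : (m:ℤ) % 2 = 1 := by omega
  have h1 : (p * (m:ℤ)) % 2 = 1 := by rw [Int.mul_emod, hpo, hm']; norm_num
  obtain ⟨t, ht⟩ : ∃ t : ℤ, p*(m:ℤ)+k = 2*t+1 := by
    refine ⟨(p*(m:ℤ)+k-1)/2, ?_⟩
    generalize p * (m:ℤ) = u at h1 ⊢
    omega
  rw [ht]
  rw [show 2*(Real.pi:ℂ)*Complex.I*((2*t+1 : ℤ):ℂ)/2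
      = 2*(Real.pi:ℂ)*Complex.I*((t : ℤ):ℂ) + (Real.pi:ℂ)*Complex.I by push_cast; ring]
  rw [Complex.exp_add, exp_int_aux, Complex.exp_pi_mul_I]
  norm_num

lemma lemB_odd (m : ℕ) [NeZero m] (hm : m % 2 = 1) (p k : ℤ) (hpo : p % 2 = 1) (hk : k % 2 = 1) :
    ∑ x : ZMod (2*m), eC (2*m) ((p : ZMod (2*m)) * x^2 + ((k:ℤ) : ZMod (2*m)) * x)
    = 2 * ∑ b : ZMod m, eC m (((2*p : ℤ) : ZMod m) * b^2 + ((k:ℤ) : ZMod m) * b) := by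
  rw [lemBcore m hm p k]
  have hm' : (m:ℤ) % 2 = 1 := by omega
  have h1 : (p * (m:ℤ)) % 2 = 1 := by rw [Int.mul_emod, hpo, hm']; norm_num
  obtain ⟨t, ht⟩ : ∃ t : ℤ, p*(m:ℤ)+k = 2*t := by
    refine ⟨(p*(m:ℤ)+k)/2, ?_⟩
    generalize p * (m:ℤ) = u at h1 ⊢
    omega
  rw [ht]
  rw [show 2*(Real.pi:ℂ)*Complex.I*((2*t : ℤ):ℂ)/2
      = 2*(Real.pi:ℂ)*Complex.I*((t : ℤ):ℂ) by push_cast; ring]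
  rw [exp_int_aux]
  norm_num

/-- Functional equation for `q ≡ 2 mod 4`:
`g_φ(p,q) = 2 g₁(2p, q/2) · G_φ⁻(-(8p)⁻¹/(q/2))`. -/
theorem stmt_15 (q : ℕ) (hq : q % 4 = 2) (p : ℤ)
    (hp : Int.gcd p (q : ℤ) = 1)
    (w : ℤ) (hw : 8 * p * w ≡ 1 [ZMOD ((q / 2 : ℕ) : ℤ)])
    (φ : ℝ → ℂ) (c : ℤ → ℂ)
    (hc : Summable fun k : ℤ => (k : ℝ) ^ 2 * ‖c k‖)
    (hφ : ∀ x : ℝ, HasSum (fun k : ℤ => c k * Complex.exp (2 * Real.pi * Complex.I * (k : ℂ) * (x : ℂ))) (φ x)) :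
    ∑ h ∈ Finset.range q, φ ((h : ℝ) / q) *
        Complex.exp (2 * Real.pi * Complex.I * (p : ℂ) * (h : ℂ) ^ 2 / q)
      = 2 * (∑ h ∈ Finset.range (q / 2),
            Complex.exp (2 * Real.pi * Complex.I * (2 * (p : ℂ)) * (h : ℂ) ^ 2 / ((q / 2 : ℕ) : ℂ))) *
          ∑' n : ℤ, c (2 * n + 1) *
            Complex.exp (2 * Real.pi * Complex.I * ((2 * n + 1 : ℤ) : ℂ) ^ 2 *
              (-(w : ℂ) / ((q / 2 : ℕ) : ℂ))) := by
  obtain ⟨m, rfl⟩ : ∃ m, q = 2 * m := ⟨q / 2, by omega⟩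
  have hm_odd : m % 2 = 1 := by omega
  haveI : NeZero m := ⟨by omega⟩
  haveI : NeZero (2 * m) := ⟨by omega⟩
  have hdiv : 2 * m / 2 = m := by omega
  rw [hdiv] at hw ⊢
  have hp_odd : p % 2 = 1 := by
    rcases Int.emod_two_eq p with h | h
    · exfalso
      have h2 : (2:ℤ) ∣ p := Int.dvd_of_emod_eq_zero h
      have h2q : (2:ℤ) ∣ ((2*m : ℕ):ℤ) := by push_cast; exact ⟨m, by ring⟩
      have hd := Int.dvd_coe_gcd h2 h2q
      rw [hp] at hd
      norm_num at hd
    · exact h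
  have h8 : ((8*p*w : ℤ) : ZMod m) = 1 := by
    have := (ZMod.intCast_eq_intCast_iff (8*p*w) 1 m).mpr hw
    simpa using this
  -- summability
  have hcsum : Summable fun k : ℤ => ‖c k‖ := by
    refine Summable.of_norm_bounded_eventually hc ?_
    rw [Filter.eventually_cofinite]
    refine Set.Finite.subset (Set.finite_singleton 0) ?_
    intro k hk
    simp only [Set.mem_setOf_eq, Real.norm_eq_abs] at hk
    simp only [Set.mem_singleton_iff]
    by_contra h0
    apply hk
    have hk1 : (1:ℝ) ≤ |(k:ℝ)| := by
      have : (1:ℤ) ≤ |k| := Int.one_le_abs (by omega)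
      calc (1:ℝ) ≤ ((|k| : ℤ):ℝ) := by exact_mod_cast this
        _ = |(k:ℝ)| := by push_cast; ring
    have hsq : (1:ℝ) ≤ (k:ℝ)^2 := by rw [← _root_.sq_abs]; nlinarith
    rw [_root_.abs_of_nonneg (norm_nonneg _)]
    nlinarith [norm_nonneg (c k)]
  have habs : ∀ (X : ℤ) (N : ℕ),
      ‖Complex.exp (2*(Real.pi:ℂ)*Complex.I*(X:ℂ)/((N:ℕ):ℂ))‖ = 1 := by
    intro X N
    rw [show 2*(Real.pi:ℂ)*Complex.I*(X:ℂ)/((N:ℕ):ℂ)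
        = ((2*Real.pi*(X:ℝ)/((N:ℕ):ℝ) : ℝ):ℂ) * Complex.I by push_cast; ring]
    exact Complex.norm_exp_ofReal_mul_I _
  have hs : ∀ h : ℕ, Summable fun k : ℤ =>
      c k * Complex.exp (2*(Real.pi:ℂ)*Complex.I*((p*(h:ℤ)^2 + k*(h:ℤ) : ℤ):ℂ)/((2*m:ℕ):ℂ)) := by
    intro h
    refine Summable.of_norm (hcsum.congr fun k => ?_)
    rw [norm_mul, habs, mul_one]
  set g : ℂ := ∑ b : ZMod m, eC m (((2*p : ℤ) : ZMod m) * b^2) with hgdef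
  have hg : (∑ h ∈ Finset.range m,
      Complex.exp (2*(Real.pi:ℂ)*Complex.I*(2*(p:ℂ))*(h:ℂ)^2/((m:ℕ):ℂ))) = g := by
    rw [hgdef, ← sum_range_zmod m (fun b => eC m (((2*p : ℤ) : ZMod m) * b^2))]
    refine Finset.sum_congr rfl fun h _ => ?_
    have h1 : ((2*p : ℤ) : ZMod m) * ((h:ℕ):ZMod m)^2 = (((2*p*(h:ℤ)^2) : ℤ) : ZMod m) := by
      push_cast; ring
    rw [h1, eC_int]
    congr 1
    push_cast
    ring
  rw [hg, ← tsum_mul_left]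
  have hinj : Function.Injective (fun n : ℤ => 2*n+1) := fun a b hab => by
    simp only at hab; omega
  calc ∑ h ∈ Finset.range (2*m), φ ((h:ℝ)/((2*m:ℕ):ℝ)) *
        Complex.exp (2*(Real.pi:ℂ)*Complex.I*(p:ℂ)*(h:ℂ)^2/((2*m:ℕ):ℂ))
      = ∑ h ∈ Finset.range (2*m), ∑' k : ℤ,
          c k * Complex.exp (2*(Real.pi:ℂ)*Complex.I*((p*(h:ℤ)^2 + k*(h:ℤ) : ℤ):ℂ)/((2*m:ℕ):ℂ)) := by
        refine Finset.sum_congr rfl fun h _ => ?_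
        rw [← (hφ ((h:ℝ) / ((2*m:ℕ):ℝ))).tsum_eq, ← tsum_mul_right]
        refine tsum_congr fun k => ?_
        rw [mul_assoc, ← Complex.exp_add]
        congr 2
        have hq0 : ((2*m:ℕ):ℂ) ≠ 0 := Nat.cast_ne_zero.mpr (NeZero.ne (2*m))
        push_cast
        field_simp
        ring
    _ = ∑' k : ℤ, ∑ h ∈ Finset.range (2*m),
          c k * Complex.exp (2*(Real.pi:ℂ)*Complex.I*((p*(h:ℤ)^2 + k*(h:ℤ) : ℤ):ℂ)/((2*m:ℕ):ℂ)) :=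
        (Summable.tsum_finsetSum fun h _ => hs h).symm
    _ = ∑' k : ℤ, c k * (∑ x : ZMod (2*m),
          eC (2*m) ((p : ZMod (2*m)) * x^2 + ((k:ℤ) : ZMod (2*m)) * x)) := by
        refine tsum_congr fun k => ?_
        rw [← Finset.mul_sum]
        congr 1
        rw [← sum_range_zmod (2*m)
          (fun x => eC (2*m) ((p : ZMod (2*m)) * x^2 + ((k:ℤ) : ZMod (2*m)) * x))]
        refine Finset.sum_congr rfl fun h _ => ?_
        have h1 : (p : ZMod (2*m)) * ((h:ℕ):ZMod (2*m))^2 + ((k:ℤ) : ZMod (2*m)) * ((h:ℕ):ZMod (2*m))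
            = (((p*(h:ℤ)^2 + k*(h:ℤ)) : ℤ) : ZMod (2*m)) := by push_cast; ring
        rw [h1, eC_int]
    _ = ∑' n : ℤ, (2 * g) * (c (2*n+1) *
          Complex.exp (2*(Real.pi:ℂ)*Complex.I*((2*n+1:ℤ):ℂ)^2 * (-(w:ℂ)/((m:ℕ):ℂ)))) := by
        rw [← Function.Injective.tsum_eq hinj ?hsupp]
        case hsupp =>
          intro k hk
          simp only [Function.mem_support] at hk
          by_contra hnr
          apply hk
          have hke : k % 2 = 0 := by
            rcases Int.emod_two_eq k with h | h
            · exact h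
            · exact absurd ⟨k/2, by simp only; omega⟩ hnr
          rw [lemB_even m hm_odd p k hp_odd hke, mul_zero]
        refine tsum_congr fun n => ?_
        show c (2*n+1) * (∑ x : ZMod (2*m),
            eC (2*m) ((p : ZMod (2*m)) * x^2 + (((2*n+1 : ℤ)) : ZMod (2*m)) * x))
          = 2 * g * (c (2*n+1) *
            Complex.exp (2*(Real.pi:ℂ)*Complex.I*((2*n+1:ℤ):ℂ)^2 * (-(w:ℂ)/((m:ℕ):ℂ))))
        rw [lemB_odd m hm_odd p (2*n+1) hp_odd (by omega), lemA m p w (2*n+1) h8, eC_int]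
        have hexp : Complex.exp (2*(Real.pi:ℂ)*Complex.I*((-(w*(2*n+1)^2) : ℤ):ℂ)/((m:ℕ):ℂ))
            = Complex.exp (2*(Real.pi:ℂ)*Complex.I*(((2*n+1:ℤ)):ℂ)^2*(-(w:ℂ)/((m:ℕ):ℂ))) := by
          congr 1
          push_cast
          ring
        rw [hexp]
        ring
end
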